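/- arXiv:1302.2842 — 9 statements merged into one kernel-verified Lean document; each statement's English description precedes it below -/
import Mathlib

section
/- If a vertex s is a sink in an acyclic edge orientation of a finite graph and s is fired (all its incident edges reversed, making it a source), then there exists a sequence of firings in which every other vertex is fired exactly once, and after this sequence the original edge orientation is restored. -/
/-- An edge orientation of a simple graph `G`: each edge gets exactly one direction. -/
structure EdgeOrientation {V : Type*} (G : SimpleGraph V) where
  dir : V → V → Prop
  dir_adj : ∀ u v, dir u v → G.Adj u v
  dir_total : ∀ u v, G.Adj u v → (dir u v ↔ ¬ dir v u)

namespace EdgeOrientation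

variable {V : Type*} {G : SimpleGraph V}

/-- An orientation is acyclic if it admits no directed cycle. -/
def Acyclic (o : EdgeOrientation G) : Prop :=
  ∀ v, ¬ Relation.TransGen o.dir v v

/-- A sink is a vertex with no outgoing edges. -/
def IsSink (o : EdgeOrientation G) (s : V) : Prop :=
  ∀ t, ¬ o.dir s t

/-- The direction relation obtained by reversing all edges incident to `s`. -/
def fireDir (s : V) (d : V → V → Prop) : V → V → Prop :=
  fun u v => ((u = s ∨ v = s) ∧ d v u) ∨ (¬ (u = s ∨ v = s) ∧ d u v)

/-- One sink-firing move on acyclic orientations. -/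
def FireStep (o o' : EdgeOrientation G) : Prop :=
  o.Acyclic ∧ ∃ s, o.IsSink s ∧ o'.dir = fireDir s o.dir

/-- Reachability by finite sequences of sink-firing moves. -/
def Reach (o o' : EdgeOrientation G) : Prop :=
  Relation.ReflTransGen FireStep o o'

/-- `FireSeq o l o'` : starting from `o`, firing the vertices in the list `l` in order
(each of which must be a sink of an acyclic orientation at its turn) yields `o'`. -/
def FireSeq : EdgeOrientation G → List V → EdgeOrientation G → Prop
  | o, [], o' => o = o'
  | o, s :: l, o' =>
      ∃ o₁ : EdgeOrientation G,
        o.Acyclic ∧ o.IsSink s ∧ o₁.dir = fireDir s o.dir ∧ FireSeq o₁ l o'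

end EdgeOrientation

namespace EdgeOrientation

variable {V : Type*} {G : SimpleGraph V}

lemma ext' {a b : EdgeOrientation G} (h : a.dir = b.dir) : a = b := by
  cases a; cases b; cases h; rfl

lemma not_dir_self (o : EdgeOrientation G) (v : V) : ¬ o.dir v v :=
  fun h => (o.dir_adj v v h).ne rfl

/-- The orientation obtained by firing `m`. -/
def fireOrient (m : V) (o : EdgeOrientation G) : EdgeOrientation G where
  dir := fireDir m o.dir
  dir_adj := by
    intro u v h
    rcases h with ⟨_, h⟩ | ⟨_, h⟩
    · exact (o.dir_adj _ _ h).symm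
    · exact o.dir_adj _ _ h
  dir_total := by
    intro u v hadj
    have h1 := o.dir_total u v hadj
    have h2 := o.dir_total v u hadj.symm
    unfold fireDir
    by_cases hc : u = m ∨ v = m <;> tauto

/-- `o.dir` with all edges crossing the set `S` reversed. -/
def dirS (o : EdgeOrientation G) (S : Finset V) : V → V → Prop :=
  fun u v => (o.dir u v ∧ (u ∈ S ↔ v ∈ S)) ∨ (o.dir v u ∧ ¬ (u ∈ S ↔ v ∈ S))

lemma acyclic_of_dirS (o : EdgeOrientation G) (hacyc : o.Acyclic) (S : Finset V)
    (hclosed : ∀ u v, o.dir u v → v ∈ S → u ∈ S)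
    (o' : EdgeOrientation G) (ho' : ∀ u v, o'.dir u v ↔ dirS o S u v) :
    o'.Acyclic := by
  have key : ∀ a b, Relation.TransGen o'.dir a b →
      (Relation.TransGen o.dir a b ∧ ((a ∈ S ∧ b ∈ S) ∨ (a ∉ S ∧ b ∉ S))) ∨
        (a ∉ S ∧ b ∈ S) := by
    intro a b h
    induction h with
    | single h =>
        rw [ho'] at h
        rcases h with ⟨h, hiff⟩ | ⟨h, hiff⟩
        · have := Relation.TransGen.single (r := o.dir) h
          by_cases ha : a ∈ S <;> by_cases hb : b ∈ S <;> tauto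
        · have := hclosed _ _ h
          by_cases ha : a ∈ S <;> by_cases hb : b ∈ S <;> tauto
    | tail hab h ih =>
        rename_i b c
        rw [ho'] at h
        rcases h with ⟨h, hiff⟩ | ⟨h, hiff⟩
        · have hcb := hclosed _ _ h
          rcases ih with ⟨htg, hside⟩ | ⟨ha, hb⟩
          · exact Or.inl ⟨htg.tail h, by tauto⟩
          · have : c ∈ S := by tauto
            tauto
        · -- crossing edge: o.dir c b, so b ∉ S and c ∈ S  (from closedness)
          have hb : b ∉ S := by
            intro hb
            exact hiff ⟨fun _ => hclosed _ _ h hb, fun _ => hb⟩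
          have hc : c ∈ S := by tauto
          rcases ih with ⟨htg, hside⟩ | ⟨ha, hbb⟩
          · rcases hside with ⟨_, hbS⟩ | ⟨ha, _⟩
            · exact absurd hbS hb
            · exact Or.inr ⟨ha, hc⟩
          · exact absurd hbb hb
  intro v hv
  rcases key v v hv with ⟨htg, _⟩ | ⟨h1, h2⟩
  · exact hacyc v htg
  · exact h1 h2

lemma isSink_of_dirS (o : EdgeOrientation G) (S : Finset V)
    (hclosed : ∀ u v, o.dir u v → v ∈ S → u ∈ S)
    (o' : EdgeOrientation G) (ho' : ∀ u v, o'.dir u v ↔ dirS o S u v)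
    {m : V} (hm : m ∈ S) (hmin : ∀ t ∈ S, ¬ o.dir m t) :
    o'.IsSink m := by
  intro t ht
  rw [ho'] at ht
  rcases ht with ⟨h, hiff⟩ | ⟨h, hiff⟩
  · exact hmin t (hiff.mp hm) h
  · exact hiff ⟨fun _ => hclosed _ _ h hm, fun _ => hm⟩

set_option maxHeartbeats 1000000 in
lemma fireDir_dirS [DecidableEq V] (o : EdgeOrientation G) {S : Finset V} {m : V}
    (hm : m ∈ S) (hmin : ∀ t ∈ S, ¬ o.dir m t)
    (o' : EdgeOrientation G) (ho' : ∀ u v, o'.dir u v ↔ dirS o S u v) :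
    ∀ u v, fireDir m o'.dir u v ↔ dirS o (S.erase m) u v := by
  intro u v
  have h1 := hmin v
  have h2 := hmin u
  have h3 := o.not_dir_self m
  simp only [fireDir, ho', dirS, Finset.mem_erase]
  by_cases hu : u = m <;> by_cases hv : v = m <;> subst_vars <;> tauto

lemma key [DecidableEq V] (o : EdgeOrientation G) (hacyc : o.Acyclic)
    [Finite V] (S : Finset V) :
    ∀ (o' : EdgeOrientation G), (∀ u v, o.dir u v → v ∈ S → u ∈ S) →
      (∀ u v, o'.dir u v ↔ dirS o S u v) →
      ∃ l : List V, l.Nodup ∧ (∀ v, v ∈ l ↔ v ∈ S) ∧ FireSeq o' l o := by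
  induction S using Finset.strongInduction with
  | _ S ih =>
    intro o' hclosed ho'
    rcases eq_or_ne S ∅ with rfl | hS
    · refine ⟨[], List.nodup_nil, by simp, ?_⟩
      have : o' = o := by
        apply ext'
        funext u v
        apply propext
        rw [ho']
        simp [dirS]
      exact this
    · -- find an o-minimal element of S
      haveI : IsTrans V (Relation.TransGen (Function.swap o.dir)) :=
        ⟨fun _ _ _ h1 h2 => h1.trans h2⟩
      haveI : IsIrrefl V (Relation.TransGen (Function.swap o.dir)) :=
        ⟨fun a h => hacyc a h.swap⟩
      have hwf : WellFounded (Relation.TransGen (Function.swap o.dir)) :=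
        Finite.wellFounded_of_trans_of_irrefl _
      have hwf' : WellFounded (Function.swap o.dir) :=
        Subrelation.wf (fun h => Relation.TransGen.single h) hwf
      obtain ⟨m, hm, hmin'⟩ := hwf'.has_min (S : Set V)
        (by simpa [Finset.nonempty_iff_ne_empty] using hS)
      have hmin : ∀ t ∈ S, ¬ o.dir m t := fun t ht h => hmin' t ht h
      have hacyc' : o'.Acyclic := acyclic_of_dirS o hacyc S hclosed o' ho'
      have hsink' : o'.IsSink m := isSink_of_dirS o S hclosed o' ho' hm hmin
      set o₂ := fireOrient m o' with ho₂
      have ho₂dir : ∀ u v, o₂.dir u v ↔ dirS o (S.erase m) u v :=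
        fireDir_dirS o hm hmin o' ho'
      have hclosed' : ∀ u v, o.dir u v → v ∈ S.erase m → u ∈ S.erase m := by
        intro u v hd hv
        rw [Finset.mem_erase] at hv ⊢
        refine ⟨fun hu => hmin v hv.2 (hu ▸ hd), hclosed _ _ hd hv.2⟩
      obtain ⟨l, hnd, hmem, hseq⟩ :=
        ih (S.erase m) (Finset.erase_ssubset hm) o₂ hclosed' ho₂dir
      refine ⟨m :: l, ?_, ?_, ?_⟩
      · refine List.nodup_cons.mpr ⟨fun h => ?_, hnd⟩
        exact (Finset.mem_erase.mp ((hmem m).mp h)).1 rfl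
      · intro v
        simp only [List.mem_cons, hmem, Finset.mem_erase]
        constructor
        · rintro (rfl | ⟨_, hv⟩) <;> [exact hm; exact hv]
        · intro hv
          by_cases h : v = m <;> tauto
      · exact ⟨o₂, hacyc', hsink', rfl, hseq⟩

end EdgeOrientation


open EdgeOrientation in
/-- If a sink `s` of an acyclic orientation `o` of a finite graph is fired, yielding `o₁`,
then there is a sequence of firings in which every vertex other than `s` is fired exactly
once, restoring the original orientation `o`. -/
theorem fire_sink_playback {V : Type*} [Fintype V] {G : SimpleGraph V}
    (o o₁ : EdgeOrientation G) (s : V)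
    (hacyc : o.Acyclic) (hsink : o.IsSink s) (hfire : o₁.dir = fireDir s o.dir) :
    ∃ l : List V, l.Nodup ∧ (∀ v : V, v ∈ l ↔ v ≠ s) ∧ FireSeq o₁ l o := by
  classical
  have ho : ∀ u v, o.dir u v ↔ dirS o Finset.univ u v := by
    intro u v; simp [dirS]
  have hmin : ∀ t ∈ (Finset.univ : Finset V), ¬ o.dir s t := fun t _ => hsink t
  have ho₁ : ∀ u v, o₁.dir u v ↔ dirS o (Finset.univ.erase s) u v := by
    intro u v
    rw [hfire]
    exact fireDir_dirS o (Finset.mem_univ s) hmin o ho u v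
  have hclosed : ∀ u v, o.dir u v → v ∈ Finset.univ.erase s → u ∈ Finset.univ.erase s := by
    intro u v hd hv
    rw [Finset.mem_erase]
    exact ⟨fun h => hsink v (h ▸ hd), Finset.mem_univ u⟩
  obtain ⟨l, hnd, hmem, hseq⟩ := key o hacyc (Finset.univ.erase s) o₁ hclosed ho₁
  refine ⟨l, hnd, fun v => ?_, hseq⟩
  rw [hmem v, Finset.mem_erase]
  simp
end

section
/- Firing a sink in an acyclic edge orientation of a finite graph yields again an acyclic edge orientation. -/
open EdgeOrientation in
/-- Firing a sink of an acyclic edge orientation of a finite graph yields again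
an acyclic edge orientation. -/
theorem fire_sink_acyclic {V : Type*} [Fintype V] {G : SimpleGraph V}
    (o o' : EdgeOrientation G) (s : V)
    (hacyc : o.Acyclic) (hsink : o.IsSink s) (hfire : o'.dir = fireDir s o.dir) :
    o'.Acyclic := by
  -- In the new orientation, no edge points into `s`.
  have hno : ∀ u, ¬ o'.dir u s := by
    intro u h
    rw [hfire] at h
    rcases h with ⟨_, hd⟩ | ⟨hn, hd⟩
    · exact hsink u hd
    · exact hn (Or.inr rfl)
  -- Edges not touching `s` coincide with old ones.
  have hsame : ∀ u v, u ≠ s → v ≠ s → o'.dir u v → o.dir u v := by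
    intro u v hu hv h
    rw [hfire] at h
    rcases h with ⟨h1, _⟩ | ⟨_, hd⟩
    · rcases h1 with h1 | h1
      · exact absurd h1 hu
      · exact absurd h1 hv
    · exact hd
  have key : ∀ a b, Relation.TransGen o'.dir a b → a ≠ s →
      b ≠ s ∧ Relation.TransGen o.dir a b := by
    intro a b h ha
    induction h with
    | single h =>
        rename_i c
        have hc : c ≠ s := fun hc => hno a (hc ▸ h)
        exact ⟨hc, Relation.TransGen.single (hsame _ _ ha hc h)⟩
    | tail _ h ih =>
        rename_i b c _
        rcases ih with ⟨hb, htr⟩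
        have hc : c ≠ s := fun hc => hno b (hc ▸ h)
        exact ⟨hc, htr.tail (hsame _ _ hb hc h)⟩
  intro v hv
  by_cases hvs : v = s
  · subst hvs
    rcases hv with h | h
    · exact hno _ h
    · rename_i h'
      exact hno _ h'
  · exact hacyc v (key v v hv hvs).2
end

section
/- The reachability relation on acyclic orientations under sink-firing is symmetric: if orientation v is reachable from orientation u by a sequence of sink firings, then u is reachable from v. -/
namespace SinkFiringAux

open EdgeOrientation

variable {V : Type*} {G : SimpleGraph V}

theorem orient_ext {o o' : EdgeOrientation G} (h : o.dir = o'.dir) : o = o' := by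
  cases o; cases o'; cases h; rfl

/-- The orientation obtained from `o` by flipping all edges crossing `B`. -/
def flipO (B : Set V) (o : EdgeOrientation G) : EdgeOrientation G where
  dir u v := ((u ∈ B ↔ v ∈ B) ∧ o.dir u v) ∨ (¬ (u ∈ B ↔ v ∈ B) ∧ o.dir v u)
  dir_adj u v h := by
    rcases h with ⟨_, h⟩ | ⟨_, h⟩
    · exact o.dir_adj _ _ h
    · exact (o.dir_adj _ _ h).symm
  dir_total u v hadj := by
    have h1 := o.dir_total u v hadj
    have h2 := o.dir_total v u hadj.symm
    by_cases hc : u ∈ B ↔ v ∈ B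
    · have hc' : v ∈ B ↔ u ∈ B := hc.symm
      tauto
    · have hc' : ¬ (v ∈ B ↔ u ∈ B) := fun h => hc h.symm
      tauto

theorem flipO_dir (B : Set V) (o : EdgeOrientation G) (u v : V) :
    (flipO B o).dir u v ↔
      (((u ∈ B ↔ v ∈ B) ∧ o.dir u v) ∨ (¬ (u ∈ B ↔ v ∈ B) ∧ o.dir v u)) := Iff.rfl

/-- A transitive irreflexive relation on a finite nonempty set has a maximal element. -/
theorem exists_max (r : V → V → Prop) (htr : Transitive r) (hirr : ∀ x, ¬ r x x)
    [DecidableEq V] :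
    ∀ (S : Finset V), S.Nonempty → ∃ t ∈ S, ∀ c ∈ S, ¬ r t c := by
  classical
  intro S
  induction S using Finset.strongInduction with
  | _ S ih =>
    rintro ⟨x, hx⟩
    by_cases hS' : (S.filter (fun c => r x c)).Nonempty
    · have hss : S.filter (fun c => r x c) ⊂ S := by
        refine Finset.ssubset_iff_of_subset (Finset.filter_subset _ _) |>.mpr ?_
        exact ⟨x, hx, by simp [hirr x]⟩
      obtain ⟨t, ht, hmax⟩ := ih _ hss hS'
      have hxt : r x t := (Finset.mem_filter.mp ht).2
      refine ⟨t, (Finset.mem_filter.mp ht).1, fun c hc hrc => ?_⟩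
      exact hmax c (Finset.mem_filter.mpr ⟨hc, htr hxt hrc⟩) hrc
    · refine ⟨x, hx, fun c hc hrc => hS' ⟨c, Finset.mem_filter.mpr ⟨hc, hrc⟩⟩⟩

section

variable [Fintype V]

/-- Key invariant: flipping across a set with no outgoing edges preserves acyclicity. -/
theorem flip_acyclic (o : EdgeOrientation G) (ho : o.Acyclic) (B : Set V)
    (hinv : ∀ b ∈ B, ∀ c, c ∉ B → ¬ o.dir b c) : (flipO B o).Acyclic := by
  -- flip-edges out of Bᶜ stay in Bᶜ; flip-edges into B come from B
  have hstep : ∀ a b, (flipO B o).dir a b → b ∈ B → a ∈ B ∧ o.dir a b := by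
    intro a b hab hb
    rcases hab with ⟨hc, h⟩ | ⟨hc, h⟩
    · exact ⟨hc.mpr hb, h⟩
    · by_cases ha : a ∈ B
      · exact absurd (Iff.intro (fun _ => hb) (fun _ => ha)) hc
      · exact absurd h (hinv b hb a ha)
  have hstep' : ∀ a b, (flipO B o).dir a b → a ∉ B → b ∉ B ∧ o.dir a b := by
    intro a b hab ha
    by_cases hb : b ∈ B
    · exact absurd (hstep a b hab hb).1 ha
    · refine ⟨hb, ?_⟩
      rcases hab with ⟨hc, h⟩ | ⟨hc, h⟩
      · exact h
      · exact absurd (Iff.intro (fun h' => absurd h' ha) (fun h' => absurd h' hb)) hc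
  intro w hw
  by_cases hwB : w ∈ B
  · -- pull the whole cycle into B
    have claim : ∀ a b, Relation.TransGen (flipO B o).dir a b → b ∈ B →
        a ∈ B ∧ Relation.TransGen o.dir a b := by
      intro a b h
      induction h with
      | single h => intro hb; exact ⟨(hstep _ _ h hb).1, .single (hstep _ _ h hb).2⟩
      | tail h₁ h₂ ih =>
        intro hb
        obtain ⟨hc, h₂'⟩ := hstep _ _ h₂ hb
        obtain ⟨ha, h₁'⟩ := ih hc
        exact ⟨ha, h₁'.tail h₂'⟩
    exact ho w (claim w w hw hwB).2
  · have claim : ∀ a b, Relation.TransGen (flipO B o).dir a b → a ∉ B →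
        b ∉ B ∧ Relation.TransGen o.dir a b := by
      intro a b h
      induction h using Relation.TransGen.head_induction_on with
      | single h => intro ha; exact ⟨(hstep' _ _ h ha).1, .single (hstep' _ _ h ha).2⟩
      | head h₁ h₂ ih =>
        intro ha
        obtain ⟨hc, h₁'⟩ := hstep' _ _ h₁ ha
        obtain ⟨hb, h₂'⟩ := ih hc
        exact ⟨hb, .head h₁' h₂'⟩
    exact ho w (claim w w hw hwB).2

open scoped Classical in
/-- Main induction: if `B` has no outgoing `o`-edges, then `o` is reachable from
`flipO B o` by firing all vertices outside `B`. -/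
theorem main (o : EdgeOrientation G) (ho : o.Acyclic) :
    ∀ (n : ℕ) (B : Finset V), (Bᶜ).card = n →
      (∀ b ∈ B, ∀ c, c ∉ B → ¬ o.dir b c) → Reach (flipO (↑B) o) o := by
  intro n
  induction n with
  | zero =>
    intro B hcard _
    have hB : B = Finset.univ := by
      have h0 : Bᶜ = (∅ : Finset V) := Finset.card_eq_zero.mp hcard
      ext x
      simp only [Finset.mem_univ, iff_true]
      by_contra hx
      exact absurd (h0 ▸ Finset.mem_compl.mpr hx) (Finset.notMem_empty x)
    subst hB
    have heq : flipO (↑(Finset.univ : Finset V)) o = o := by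
      apply orient_ext
      funext u v
      apply propext
      constructor
      · rintro (⟨_, h⟩ | ⟨hc, _⟩)
        · exact h
        · exact absurd (by simp) hc
      · intro h
        exact Or.inl ⟨by simp, h⟩
    rw [heq]
    exact Relation.ReflTransGen.refl
  | succ n ih =>
    intro B hcard hinv
    have hne : (Bᶜ : Finset V).Nonempty := Finset.card_pos.mp (by omega)
    obtain ⟨t, htc, hmax⟩ := exists_max (Relation.TransGen o.dir)
      (fun _ _ _ => Relation.TransGen.trans) ho (Bᶜ) hne
    have htB : t ∉ B := Finset.mem_compl.mp htc
    -- t is a sink of flipO B o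
    have hsink : (flipO (↑B) o).IsSink t := by
      intro v hv
      rcases hv with ⟨hc, h⟩ | ⟨hc, h⟩
      · -- v ∉ B, o.dir t v
        have hvB : v ∉ B := fun hvB => htB (by simpa using hc.mpr (by simpa using hvB))
        exact hmax v (Finset.mem_compl.mpr hvB) (.single h)
      · -- crossing: o.dir v t with v ∈ B
        have htB' : t ∉ (↑B : Set V) := by simpa using htB
        have hvB : v ∈ B := by
          by_contra hvB
          exact hc (iff_of_false htB' (by simpa using hvB))
        exact hinv v hvB t htB h
    have hacy : (flipO (↑B) o).Acyclic :=
      flip_acyclic o ho _ (fun b hb c hc => hinv b hb c hc)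
    -- the fired orientation is flipO (insert t B) o
    have hdir : (flipO (↑(insert t B)) o).dir = fireDir t (flipO (↑B) o).dir := by
      funext u v
      apply propext
      simp only [flipO_dir, fireDir, Finset.coe_insert, Set.mem_insert_iff,
        Finset.mem_coe]
      by_cases hu : u = t <;> by_cases hv : v = t <;>
        by_cases huB : u ∈ B <;> by_cases hvB : v ∈ B <;>
        simp_all <;> tauto
    have hfire : FireStep (flipO (↑B) o) (flipO (↑(insert t B)) o) :=
      ⟨hacy, t, hsink, hdir⟩
    have hinv' : ∀ b ∈ insert t B, ∀ c, c ∉ insert t B → ¬ o.dir b c := by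
      intro b hb c hc hbc
      rcases Finset.mem_insert.mp hb with rfl | hb
      · exact hmax c (Finset.mem_compl.mpr (fun h => hc (Finset.mem_insert_of_mem h)))
          (.single hbc)
      · exact hinv b hb c (fun h => hc (Finset.mem_insert_of_mem h)) hbc
    have hcard' : ((insert t B)ᶜ : Finset V).card = n := by
      have : (insert t B)ᶜ = (Bᶜ : Finset V).erase t := by
        ext x; simp [Finset.mem_erase, and_comm, not_or]
      rw [this, Finset.card_erase_of_mem htc, hcard]
      omega
    exact Relation.ReflTransGen.head hfire (ih (insert t B) hcard' hinv')

open scoped Classical in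
theorem key_step {o o' : EdgeOrientation G} (h : FireStep o o') : Reach o' o := by
  obtain ⟨ho, s, hs, hdir⟩ := h
  have : o' = flipO (↑({s} : Finset V)) o := by
    apply orient_ext
    rw [hdir]
    funext u v
    apply propext
    simp only [flipO_dir, fireDir, Finset.coe_singleton, Set.mem_singleton_iff]
    by_cases hu : u = s <;> by_cases hv : v = s <;> simp_all <;> tauto
  rw [this]
  refine main o ho (({s}ᶜ : Finset V).card) {s} rfl ?_
  intro b hb c hc hbc
  rw [Finset.mem_singleton] at hb
  subst hb
  exact hs c hbc

end

end SinkFiringAux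

open EdgeOrientation in
/-- Reachability under sink firing is symmetric: if `v` is reachable from `u`
by a sequence of sink firings, then `u` is reachable from `v`. -/
theorem reach_symm {V : Type*} [Fintype V] {G : SimpleGraph V}
    (u v : EdgeOrientation G) (h : Reach u v) : Reach v u := by
  induction h with
  | refl => exact Relation.ReflTransGen.refl
  | tail _ hstep ih => exact (SinkFiringAux.key_step hstep).trans ih
end

section
/- Reachability under sink firing is an equivalence relation on the set of acyclic edge orientations of a finite graph. -/
namespace EdgeOrientation

variable {V : Type*} {G : SimpleGraph V}

theorem ext'_s4 {o o' : EdgeOrientation G} (h : o.dir = o'.dir) : o = o' := by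
  cases o; cases o'; cases h; rfl

/-- The orientation obtained from `o` by flipping every edge crossing `F`. -/
def after (o : EdgeOrientation G) (F : Set V) : EdgeOrientation G where
  dir u v := ((u ∈ F ↔ v ∈ F) ∧ o.dir u v) ∨ (¬(u ∈ F ↔ v ∈ F) ∧ o.dir v u)
  dir_adj u v h := by
    rcases h with ⟨_, h⟩ | ⟨_, h⟩
    · exact o.dir_adj u v h
    · exact (o.dir_adj v u h).symm
  dir_total u v hadj := by
    have h1 := o.dir_total u v hadj
    have h2 := o.dir_total v u hadj.symm
    by_cases h : (u ∈ F ↔ v ∈ F) <;> tauto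

theorem after_dir (o : EdgeOrientation G) (F : Set V) (u v : V) :
    (o.after F).dir u v ↔
      ((u ∈ F ↔ v ∈ F) ∧ o.dir u v) ∨ (¬(u ∈ F ↔ v ∈ F) ∧ o.dir v u) := Iff.rfl

theorem after_empty (o : EdgeOrientation G) : (o.after ∅).dir = o.dir := by
  funext u v
  simp [after]

theorem after_univ (o : EdgeOrientation G) : o.after Set.univ = o := by
  apply ext'_s4
  funext u v
  simp [after]

/-- `F` is upward closed for `o`. -/
def Closed (o : EdgeOrientation G) (F : Set V) : Prop :=
  ∀ u v, o.dir u v → u ∈ F → v ∈ F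

theorem after_dir_into (o : EdgeOrientation G) {F : Set V} (hF : o.Closed F)
    {a b : V} (h : (o.after F).dir a b) (hb : b ∈ F) : a ∈ F ∧ o.dir a b := by
  rcases h with ⟨hiff, hd⟩ | ⟨hniff, hd⟩
  · exact ⟨hiff.mpr hb, hd⟩
  · exact absurd (iff_of_true (hF _ _ hd hb) hb) hniff

theorem after_dir_out (o : EdgeOrientation G) {F : Set V} (hF : o.Closed F)
    {a b : V} (h : (o.after F).dir a b) (ha : a ∉ F) : b ∉ F ∧ o.dir a b := by
  rcases h with ⟨hiff, hd⟩ | ⟨hniff, hd⟩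
  · exact ⟨fun hb => ha (hiff.mpr hb), hd⟩
  · by_cases hb : b ∈ F
    · exact absurd (hF _ _ hd hb) ha
    · exact absurd (iff_of_false ha hb) hniff

theorem after_acyclic (o : EdgeOrientation G) (ho : o.Acyclic) {F : Set V}
    (hF : o.Closed F) : (o.after F).Acyclic := by
  have hin : ∀ a b, Relation.TransGen (o.after F).dir a b → b ∈ F →
      a ∈ F ∧ Relation.TransGen o.dir a b := by
    intro a b h
    induction h with
    | single h => intro hb; obtain ⟨ha, hd⟩ := o.after_dir_into hF h hb
                  exact ⟨ha, Relation.TransGen.single hd⟩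
    | tail _ h ih =>
        intro hb
        obtain ⟨hc, hd⟩ := o.after_dir_into hF h hb
        obtain ⟨ha, ht⟩ := ih hc
        exact ⟨ha, ht.tail hd⟩
  have hout : ∀ a b, Relation.TransGen (o.after F).dir a b → a ∉ F →
      b ∉ F ∧ Relation.TransGen o.dir a b := by
    intro a b h
    induction h with
    | single h => intro ha; obtain ⟨hb, hd⟩ := o.after_dir_out hF h ha
                  exact ⟨hb, Relation.TransGen.single hd⟩
    | tail _ h ih =>
        intro ha
        obtain ⟨hc, ht⟩ := ih ha
        obtain ⟨hb, hd⟩ := o.after_dir_out hF h hc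
        exact ⟨hb, ht.tail hd⟩
  intro v hv
  by_cases hvF : v ∈ F
  · exact ho v (hin v v hv hvF).2
  · exact ho v (hout v v hv hvF).2

theorem after_sink (o : EdgeOrientation G) {F : Set V} (hF : o.Closed F)
    {v : V} (hv : v ∉ F) (hmax : ∀ t, t ∉ F → ¬ o.dir v t) :
    (o.after F).IsSink v := by
  intro t ht
  rcases ht with ⟨hiff, hd⟩ | ⟨hniff, hd⟩
  · exact hmax t (fun htF => hv (hiff.mpr htF)) hd
  · by_cases htF : t ∈ F
    · exact hv (hF _ _ hd htF)
    · exact hniff (iff_of_false hv htF)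

theorem after_insert_dir (o : EdgeOrientation G) {F : Set V} {v : V} (hv : v ∉ F) :
    (o.after (insert v F)).dir = fireDir v (o.after F).dir := by
  funext u w
  show _ = ((((u = v ∨ w = v) ∧ (o.after F).dir w u) ∨ _ : Prop))
  by_cases hu : u = v <;> by_cases hw : w = v
  · subst hu; subst hw
    simp [after, fireDir]
  · subst hu
    by_cases hwF : w ∈ F <;>
      simp [after, fireDir, hw, hwF, hv, Set.mem_insert_iff, Ne.symm hw]
  · subst hw
    by_cases huF : u ∈ F <;>
      simp [after, fireDir, hu, huF, hv, Set.mem_insert_iff, Ne.symm hu]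
  · by_cases huF : u ∈ F <;> by_cases hwF : w ∈ F <;>
      simp [after, fireDir, hu, hw, huF, hwF, Set.mem_insert_iff]

theorem exists_max [Finite V] (o : EdgeOrientation G) (ho : o.Acyclic)
    (S : Set V) (hS : S.Nonempty) : ∃ m ∈ S, ∀ t ∈ S, ¬ o.dir m t := by
  set r : V → V → Prop := fun a b => Relation.TransGen o.dir b a with hr
  haveI : IsTrans V r := ⟨fun a b c h1 h2 => h2.trans h1⟩
  haveI : IsIrrefl V r := ⟨fun a h => ho a h⟩
  obtain ⟨m, hm, hmin⟩ := (Finite.wellFounded_of_trans_of_irrefl r).has_min S hS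
  exact ⟨m, hm, fun t ht hd => hmin t ht (Relation.TransGen.single hd)⟩

theorem reach_from_after [Fintype V] [DecidableEq V] (o : EdgeOrientation G)
    (ho : o.Acyclic) :
    ∀ (n : ℕ) (F : Finset V), Fᶜ.card = n → o.Closed ↑F → Reach (o.after ↑F) o := by
  intro n
  induction n with
  | zero =>
      intro F hcard _
      have : F = Finset.univ := F.compl_eq_empty_iff.mp (Finset.card_eq_zero.mp hcard)
      subst this
      rw [show ((Finset.univ : Finset V) : Set V) = Set.univ by simp, o.after_univ]
      exact Relation.ReflTransGen.refl
  | succ n ih =>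
      intro F hcard hF
      have hne : (Fᶜ : Finset V).Nonempty := Finset.card_pos.mp (by omega)
      obtain ⟨m, hm, hmax⟩ := o.exists_max ho {x : V | x ∉ F}
        ⟨hne.choose, Finset.mem_compl.mp hne.choose_spec⟩
      have hmF : m ∉ F := hm
      have hmax' : ∀ t, t ∉ (F : Set V) → ¬ o.dir m t := fun t ht => hmax t ht
      have hclosed' : o.Closed ↑(insert m F) := by
        intro u w hd hu
        rcases Finset.mem_insert.mp hu with rfl | huF
        · by_cases hwF : w ∈ F
          · exact Finset.mem_insert_of_mem hwF
          · exact absurd hd (hmax' w hwF)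
        · exact Finset.mem_insert_of_mem (hF u w hd huF)
      have hstep : FireStep (o.after ↑F) (o.after ↑(insert m F)) := by
        refine ⟨o.after_acyclic ho hF, m, o.after_sink hF hmF hmax', ?_⟩
        rw [Finset.coe_insert]
        exact o.after_insert_dir hmF
      have hcard' : (insert m F)ᶜ.card = n := by
        rw [Finset.compl_insert, Finset.card_erase_of_mem (Finset.mem_compl.mpr hmF),
          hcard]
        omega
      exact Relation.ReflTransGen.head hstep (ih (insert m F) hcard' hclosed')

theorem fireStep_reverse [Fintype V] {o o' : EdgeOrientation G}
    (h : FireStep o o') : Reach o' o := by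
  classical
  obtain ⟨ho, s, hs, hdir⟩ := h
  have hsink : o.Closed {s} := by
    intro u v hd hu
    rw [Set.mem_singleton_iff] at hu
    subst hu
    exact absurd hd (hs v)
  have h0 : o' = o.after {s} := by
    apply ext'_s4
    rw [hdir]
    have h1 : (o.after (insert s (∅ : Set V))).dir = fireDir s (o.after ∅).dir :=
      o.after_insert_dir (by simp)
    rw [after_empty] at h1
    rw [← h1]
    norm_num
  rw [h0]
  have := o.reach_from_after ho (Finset.card ({s}ᶜ : Finset V)) {s} rfl
    (by rw [Finset.coe_singleton]; exact hsink)
  rwa [Finset.coe_singleton] at this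

theorem reach_symm [Fintype V] {o o' : EdgeOrientation G} (h : Reach o o') :
    Reach o' o := by
  induction h with
  | refl => exact Relation.ReflTransGen.refl
  | tail _ hbc ih => exact Relation.ReflTransGen.trans (fireStep_reverse hbc) ih

end EdgeOrientation

open EdgeOrientation in
/-- Reachability under sink firing is an equivalence relation on the set of
acyclic edge orientations of a finite graph. -/
theorem reach_equivalence {V : Type*} [Fintype V] (G : SimpleGraph V) :
    Equivalence (fun a b : {o : EdgeOrientation G // o.Acyclic} => Reach a.1 b.1) := by
  constructor
  · intro a; exact Relation.ReflTransGen.refl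
  · intro a b h
    exact reach_symm h
  · intro a b c h1 h2; exact Relation.ReflTransGen.trans h1 h2
end

section
/- For the cycle graph on n vertices, two acyclic orientations are reachable from each other by sink firings if and only if they have the same number of anticlockwise-oriented edges; consequently there are exactly n−1 reachability classes, of sizes C(n,1), ..., C(n,n−1). -/
namespace CycleProof
open Finset
open Fin.CommRing

variable {n : ℕ} [NeZero n]

lemma val_one (hn : 2 ≤ n) : ((1 : Fin n) : ℕ) = 1 := by
  rw [Fin.val_one']; exact Nat.mod_eq_of_lt (by omega)

lemma val_add_one (hn : 2 ≤ n) (a : Fin n) :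
    ((a + 1 : Fin n) : ℕ) = if (a : ℕ) = n - 1 then 0 else (a : ℕ) + 1 := by
  have h1 := val_one (n := n) hn
  rw [Fin.val_add, h1]
  have := a.isLt
  split_ifs with h
  · rw [h, Nat.sub_add_cancel (by omega), Nat.mod_self]
  · exact Nat.mod_eq_of_lt (by omega)

lemma add_one_ne (hn : 2 ≤ n) (a : Fin n) : a + 1 ≠ a := by
  intro h
  have h2 := val_add_one hn a
  rw [h] at h2
  have := a.isLt
  split_ifs at h2 <;> omega

lemma val_sub_one (hn : 2 ≤ n) (a : Fin n) :
    ((a - 1 : Fin n) : ℕ) = if (a : ℕ) = 0 then n - 1 else (a : ℕ) - 1 := by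
  have h1 : a - 1 + 1 = a := by ring
  have h2 := val_add_one hn (a - 1)
  have := (a - 1).isLt
  have := a.isLt
  rw [h1] at h2
  split_ifs at h2 with h3 <;> split_ifs with h4 <;> omega

lemma sub_one_ne (hn : 2 ≤ n) (a : Fin n) : a - 1 ≠ a := fun h =>
  add_one_ne hn (a - 1) (by rw [show a - 1 + 1 = a from by ring, h])

lemma val_zero_iff (a : Fin n) : (a : ℕ) = 0 ↔ a = 0 := by
  rw [Fin.ext_iff, Fin.val_zero]

lemma cycle_adj (hn : 3 ≤ n) (u v : Fin n) :
    (SimpleGraph.cycleGraph n).Adj u v ↔ (u = v + 1 ∨ v = u + 1) := by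
  have h1 : ((1 : Fin n) : ℕ) = 1 := val_one (by omega)
  rw [SimpleGraph.cycleGraph_adj']
  constructor
  · rintro (hx | hx)
    · left
      have h2 : u - v = 1 := Fin.ext (by rw [hx, h1])
      rw [← h2]; ring
    · right
      have h2 : v - u = 1 := Fin.ext (by rw [hx, h1])
      rw [← h2]; ring
  · rintro (hx | hx)
    · left; rw [hx]
      have : v + 1 - v = 1 := by ring
      rw [this, h1]
    · right; rw [hx]
      have : u + 1 - u = 1 := by ring
      rw [this, h1]

/-- `u+1` and `v+1` determine: not both `u = v+1` and `v = u+1` when `3 ≤ n`. -/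
lemma not_both (hn : 3 ≤ n) (u v : Fin n) (h1 : u = v + 1) (h2 : v = u + 1) : False := by
  rw [h2] at h1
  have : ((u + 1 + 1 : Fin n) : ℕ) = u := by rw [← h1]
  have ha := val_add_one (n := n) (by omega) u
  have hb := val_add_one (n := n) (by omega) (u + 1)
  have := u.isLt
  split_ifs at ha <;> split_ifs at hb <;> omega


section Orient
open EdgeOrientation

def dirOf (f : Fin n → Bool) : Fin n → Fin n → Prop :=
  fun u v => (v = u + 1 ∧ f u = false) ∨ (u = v + 1 ∧ f v = true)

lemma adj_succ (hn : 3 ≤ n) (u : Fin n) : (SimpleGraph.cycleGraph n).Adj u (u + 1) := by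
  rw [cycle_adj hn]; right; rfl

def mkO (hn : 3 ≤ n) (f : Fin n → Bool) : EdgeOrientation (SimpleGraph.cycleGraph n) where
  dir := dirOf f
  dir_adj := by
    intro u v h
    rw [cycle_adj hn]
    rcases h with ⟨h, _⟩ | ⟨h, _⟩
    · right; exact h
    · left; exact h
  dir_total := by
    intro u v hadj
    rw [cycle_adj hn] at hadj
    rcases hadj with h | h
    · subst h
      have hne : ¬ v = v + 1 + 1 := fun h1 => not_both hn v (v+1) h1 rfl
      constructor
      · rintro (⟨h1, -⟩ | ⟨-, h2⟩)
        · exact absurd h1 hne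
        · rintro (⟨-, h3⟩ | ⟨h1, -⟩)
          · rw [h2] at h3; cases h3
          · exact hne h1
      · intro h2
        right; refine ⟨rfl, ?_⟩
        cases hf : f v
        · exact absurd (Or.inl ⟨rfl, hf⟩) h2
        · rfl
    · subst h
      have hne : ¬ u = u + 1 + 1 := fun h1 => not_both hn u (u+1) h1 rfl
      constructor
      · rintro (⟨-, h2⟩ | ⟨h1, -⟩)
        · rintro (⟨h1, -⟩ | ⟨-, h3⟩)
          · exact hne h1
          · rw [h2] at h3; cases h3
        · exact absurd h1 hne
      · intro h2
        left; refine ⟨rfl, ?_⟩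
        cases hf : f u
        · rfl
        · exact absurd (Or.inr ⟨rfl, hf⟩) h2

noncomputable def ef (o : EdgeOrientation (SimpleGraph.cycleGraph n)) : Fin n → Bool :=
  fun i => @decide (o.dir (i+1) i) (Classical.propDecidable _)

lemma ef_true {o : EdgeOrientation (SimpleGraph.cycleGraph n)} {i : Fin n} :
    ef o i = true ↔ o.dir (i+1) i := by
  simp [ef]

lemma ef_false {o : EdgeOrientation (SimpleGraph.cycleGraph n)} {i : Fin n} :
    ef o i = false ↔ ¬ o.dir (i+1) i := by
  simp [ef]

lemma dir_succ_iff (hn : 3 ≤ n) (o : EdgeOrientation (SimpleGraph.cycleGraph n)) (u : Fin n) :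
    o.dir u (u+1) ↔ ef o u = false := by
  rw [ef_false, o.dir_total _ _ (adj_succ hn u)]

lemma dir_iff (hn : 3 ≤ n) (o : EdgeOrientation (SimpleGraph.cycleGraph n)) (u v : Fin n) :
    o.dir u v ↔ dirOf (ef o) u v := by
  constructor
  · intro h
    have hadj := o.dir_adj _ _ h
    rw [cycle_adj hn] at hadj
    rcases hadj with h2 | h2
    · right; refine ⟨h2, ef_true.mpr ?_⟩; rwa [h2] at h
    · left; refine ⟨h2, (dir_succ_iff hn o u).mp ?_⟩; rwa [h2] at h
  · rintro (⟨h2, h3⟩ | ⟨h2, h3⟩)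
    · subst h2; exact (dir_succ_iff hn o u).mpr h3
    · subst h2; exact ef_true.mp h3

lemma orient_ext {o o' : EdgeOrientation (SimpleGraph.cycleGraph n)}
    (h : ∀ u v, o.dir u v ↔ o'.dir u v) : o = o' := by
  obtain ⟨d, ha, hb⟩ := o; obtain ⟨d', ha', hb'⟩ := o'
  have : d = d' := funext fun u => funext fun v => propext (h u v)
  subst this; rfl

lemma mkO_ef (hn : 3 ≤ n) (o : EdgeOrientation (SimpleGraph.cycleGraph n)) :
    mkO hn (ef o) = o :=
  orient_ext fun u v => ((dir_iff hn o u v).symm)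

lemma ef_mkO (hn : 3 ≤ n) (f : Fin n → Bool) : ef (mkO hn f) = f := by
  funext i
  rcases hf : f i with _|_
  · rw [ef_false]
    rintro (⟨h1, -⟩ | ⟨-, h2⟩)
    · exact not_both hn i (i+1) h1 rfl
    · rw [hf] at h2; cases h2
  · rw [ef_true]
    right; exact ⟨rfl, hf⟩

lemma isSink_iff (hn : 3 ≤ n) (o : EdgeOrientation (SimpleGraph.cycleGraph n)) (s : Fin n) :
    IsSink o s ↔ (ef o (s-1) = false ∧ ef o s = true) := by
  have hs1 : s - 1 + 1 = s := by ring
  constructor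
  · intro h
    constructor
    · rw [ef_false, hs1]; exact h _
    · rw [ef_true, o.dir_total _ _ ((SimpleGraph.cycleGraph n).adj_symm (adj_succ hn s))]
      exact h _
  · rintro ⟨h1, h2⟩ t hdir
    have hadj := o.dir_adj _ _ hdir
    rw [cycle_adj hn] at hadj
    rcases hadj with h3 | h3
    · have : t = s - 1 := by rw [h3]; ring
      subst this
      rw [ef_false, hs1] at h1
      exact h1 hdir
    · subst h3
      rw [ef_true] at h2
      exact (o.dir_total _ _ (adj_succ hn s)).mp hdir h2

end Orient

section Acyclicity
open EdgeOrientation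

def NonConst (f : Fin n → Bool) : Prop := (∃ i, f i = true) ∧ (∃ i, f i = false)

lemma not_acyclic_allTrue (o : EdgeOrientation (SimpleGraph.cycleGraph n))
    (h : ∀ i, ef o i = true) : ¬ o.Acyclic := by
  intro hac
  have hdir : ∀ i : Fin n, o.dir (i+1) i := fun i => ef_true.mp (h i)
  have claim : ∀ m : ℕ, Relation.TransGen o.dir ((m+1 : ℕ) : Fin n) 0 := by
    intro m
    induction m with
    | zero => simpa using Relation.TransGen.single (hdir 0)
    | succ m ih =>
      refine Relation.TransGen.head ?_ ih
      have : ((m+1+1 : ℕ) : Fin n) = ((m+1 : ℕ) : Fin n) + 1 := by push_cast; ring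
      rw [this]; exact hdir _
  have hnp : 0 < n := Nat.pos_of_ne_zero (NeZero.ne n)
  have := claim (n - 1)
  rw [show (n - 1 + 1 : ℕ) = n from by omega] at this
  rw [Fin.natCast_self] at this
  exact hac 0 this

lemma not_acyclic_allFalse (o : EdgeOrientation (SimpleGraph.cycleGraph n)) (hn : 3 ≤ n)
    (h : ∀ i, ef o i = false) : ¬ o.Acyclic := by
  intro hac
  have hdir : ∀ i : Fin n, o.dir i (i+1) := fun i => (dir_succ_iff hn o i).mpr (h i)
  have claim : ∀ m : ℕ, Relation.TransGen o.dir 0 ((m+1 : ℕ) : Fin n) := by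
    intro m
    induction m with
    | zero => simpa using Relation.TransGen.single (hdir 0)
    | succ m ih =>
      refine Relation.TransGen.tail ih ?_
      have : ((m+1+1 : ℕ) : Fin n) = ((m+1 : ℕ) : Fin n) + 1 := by push_cast; ring
      rw [this]; exact hdir _
  have hnp : 0 < n := Nat.pos_of_ne_zero (NeZero.ne n)
  have := claim (n - 1)
  rw [show (n - 1 + 1 : ℕ) = n from by omega] at this
  rw [Fin.natCast_self] at this
  exact hac 0 this

lemma nonconst_of_acyclic (hn : 3 ≤ n) (o : EdgeOrientation (SimpleGraph.cycleGraph n))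
    (hac : o.Acyclic) : NonConst (ef o) := by
  constructor
  · by_contra h
    push_neg at h
    exact not_acyclic_allFalse o hn (fun i => by simpa using h i) hac
  · by_contra h
    push_neg at h
    exact not_acyclic_allTrue o (fun i => by
      have := h i; revert this; cases ef o i <;> simp) hac

lemma exists_boundary {f : Fin n → Bool} (h : NonConst f) :
    ∃ p, f p = false ∧ f (p + 1) = true := by
  obtain ⟨⟨j, hj⟩, ⟨i, hi⟩⟩ := h
  have hex : ∃ t : ℕ, f (i + (t : Fin n)) = true := by
    refine ⟨(j - i).val, ?_⟩
    rw [Fin.cast_val_eq_self, add_sub_cancel]; exact hj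
  classical
  let t0 := Nat.find hex
  have ht0 : f (i + (t0 : Fin n)) = true := Nat.find_spec hex
  have ht0pos : 1 ≤ t0 := by
    rcases Nat.eq_zero_or_pos t0 with h0 | h0
    · exfalso
      have := ht0
      rw [h0] at this
      simp only [Nat.cast_zero, add_zero] at this
      rw [hi] at this; cases this
    · exact h0
  refine ⟨i + ((t0 - 1 : ℕ) : Fin n), ?_, ?_⟩
  · have := Nat.find_min hex (m := t0 - 1) (by omega)
    revert this
    cases f (i + ((t0 - 1 : ℕ) : Fin n)) <;> simp
  · have : i + ((t0 - 1 : ℕ) : Fin n) + 1 = i + (t0 : Fin n) := by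
      have : ((t0 - 1 : ℕ) : Fin n) + 1 = (t0 : Fin n) := by
        conv_rhs => rw [show t0 = (t0 - 1) + 1 from by omega]
        rw [Nat.cast_add, Nat.cast_one]
      rw [add_assoc, this]
    rw [this]; exact ht0


lemma acyclic_of_nonconst (hn : 3 ≤ n) (o : EdgeOrientation (SimpleGraph.cycleGraph n))
    (h : NonConst (ef o)) : o.Acyclic := by
  classical
  obtain ⟨p, hp0, hp1⟩ := exists_boundary h
  set s : Fin n := p + 1 with hs
  have hs0 : ef o (s - 1) = false := by rwa [hs, add_sub_cancel_right]
  have hs1 : ef o s = true := hp1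
  set e : ℕ → ℤ := fun j => if ef o (s + (j : Fin n)) = false then 1 else -1 with he
  set g : ℕ → ℤ := fun m => -(∑ j ∈ Finset.Ico 1 m, e j) with hg
  set φ : Fin n → ℤ := fun u => if u = s then -(2*(n:ℤ)) else g ((u - s).val) with hφ
  have habs : ∀ j, |e j| ≤ 1 := by
    intro j; rw [he]; dsimp only; split_ifs <;> simp
  have gabs : ∀ m, m ≤ n → |g m| ≤ (n : ℤ) := by
    intro m hm
    rw [hg]; dsimp only
    rw [abs_neg]
    calc |∑ j ∈ Finset.Ico 1 m, e j| ≤ ∑ j ∈ Finset.Ico 1 m, |e j| :=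
          Finset.abs_sum_le_sum_abs _ _
      _ ≤ ∑ _j ∈ Finset.Ico 1 m, (1 : ℤ) := Finset.sum_le_sum (fun j _ => habs j)
      _ = ((m - 1 : ℕ) : ℤ) := by rw [Finset.sum_const, Nat.card_Ico]; simp
      _ ≤ (n : ℤ) := by exact_mod_cast Nat.le_trans (Nat.sub_le m 1) hm
  have grec : ∀ m, 1 ≤ m → g (m + 1) = g m - e m := by
    intro m hm
    rw [hg]; dsimp only
    rw [Finset.sum_Ico_succ_top hm]
    ring
  have hφne : ∀ u : Fin n, u ≠ s → -(n:ℤ) ≤ φ u := by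
    intro u hu
    rw [hφ]; dsimp only
    rw [if_neg hu]
    have := gabs ((u - s).val) (le_of_lt (u - s).isLt)
    have := abs_le.mp this
    omega
  have key : ∀ u w, o.dir u w → φ w < φ u := by
    intro u w hd
    rw [dir_iff hn] at hd
    have hnpos : (0:ℤ) < n := by exact_mod_cast Nat.pos_of_ne_zero (NeZero.ne n)
    rcases hd with ⟨hw, hfu⟩ | ⟨hu, hfw⟩
    · -- w = u + 1, f u = false
      have hus : u ≠ s := by
        intro hus; rw [hus, hs1] at hfu; cases hfu
      by_cases hws : w = s
      · have h1 := hφne u hus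
        have h2 : φ w = -(2*(n:ℤ)) := by rw [hφ]; dsimp only; rw [if_pos hws]
        omega
      · set m := (u - s).val with hm
        have hm1 : 1 ≤ m := by
          rcases Nat.eq_zero_or_pos m with h0 | h0
          · exact absurd (sub_eq_zero.mp ((val_zero_iff _).mp h0)) hus
          · exact h0
        have hvw : (w - s).val = m + 1 := by
          have hws' : w - s = (u - s) + 1 := by rw [hw]; ring
          rw [hws', val_add_one (by omega)]
          split_ifs with hcase
          · exfalso
            apply hws
            have : (u - s) + 1 = 0 := by
              apply (val_zero_iff _).mp
              rw [val_add_one (by omega), if_pos hcase]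
            rw [← hws'] at this
            exact sub_eq_zero.mp this
          · rfl
        have hem : e m = 1 := by
          rw [he]; dsimp only
          rw [hm, Fin.cast_val_eq_self, add_sub_cancel, hfu]
          simp
        have hφu : φ u = g m := by rw [hφ]; dsimp only; rw [if_neg hus]
        have hφw : φ w = g (m + 1) := by rw [hφ]; dsimp only; rw [if_neg hws, hvw]
        rw [hφu, hφw, grec m hm1, hem]
        omega
    · -- u = w + 1, f w = true
      have hus : u ≠ s := by
        intro hus
        have : w = s - 1 := by rw [← hus, hu]; ring
        rw [this, hs0] at hfw; cases hfw
      by_cases hws : w = s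
      · have h1 := hφne u hus
        have h2 : φ w = -(2*(n:ℤ)) := by rw [hφ]; dsimp only; rw [if_pos hws]
        omega
      · set m := (u - s).val with hm
        have hm1 : 1 ≤ m := by
          rcases Nat.eq_zero_or_pos m with h0 | h0
          · exact absurd (sub_eq_zero.mp ((val_zero_iff _).mp h0)) hus
          · exact h0
        have hvw : (w - s).val = m - 1 := by
          have hws' : w - s = (u - s) - 1 := by rw [hu]; ring
          rw [hws', val_sub_one (by omega), if_neg (by omega)]
        have hm2 : 2 ≤ m := by
          rcases Nat.eq_zero_or_pos ((w - s).val) with h0 | h0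
          · exact absurd (sub_eq_zero.mp ((val_zero_iff _).mp h0)) hws
          · omega
        have hem : e (m - 1) = -1 := by
          rw [he]; dsimp only
          rw [show ((m - 1 : ℕ) : Fin n) = ((w - s).val : Fin n) from by rw [hvw],
            Fin.cast_val_eq_self, add_sub_cancel, hfw]
          simp
        have hφu : φ u = g m := by rw [hφ]; dsimp only; rw [if_neg hus]
        have hφw : φ w = g (m - 1) := by rw [hφ]; dsimp only; rw [if_neg hws, hvw]
        have hrec := grec (m - 1) (by omega)
        rw [show m - 1 + 1 = m from by omega] at hrec
        rw [hφu, hφw, hrec, hem]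
        omega
  have mono : ∀ a b, Relation.TransGen o.dir a b → φ b < φ a := by
    intro a b hab
    induction hab with
    | single h1 => exact key _ _ h1
    | tail _ h1 ih => exact lt_trans (key _ _ h1) ih
  exact fun v hv => lt_irrefl _ (mono v v hv)

end Acyclicity


section Configs
open EdgeOrientation

lemma val_sub (a b : Fin n) :
    ((a - b : Fin n) : ℕ) = if (b:ℕ) ≤ (a:ℕ) then (a:ℕ) - (b:ℕ) else (a:ℕ) + n - (b:ℕ) := by
  have ha := a.isLt
  have hb := b.isLt
  rw [Fin.sub_def]
  simp only
  split_ifs with h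
  · rw [show n - (b:ℕ) + (a:ℕ) = ((a:ℕ) - (b:ℕ)) + n from by omega, Nat.add_mod_right]
    exact Nat.mod_eq_of_lt (by omega)
  · rw [Nat.mod_eq_of_lt (by omega)]; omega

def cnt (f : Fin n → Bool) : ℕ := (Finset.univ.filter (fun i => f i = true)).card

def Move (f g : Fin n → Bool) : Prop :=
  ∃ s : Fin n, f (s-1) = false ∧ f s = true ∧
    g = Function.update (Function.update f (s-1) true) s false

def CReach : (Fin n → Bool) → (Fin n → Bool) → Prop := Relation.ReflTransGen Move

lemma move_eval (hn : 3 ≤ n) {f : Fin n → Bool} {s : Fin n}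
    (g : Fin n → Bool) (hg : g = Function.update (Function.update f (s-1) true) s false) :
    g s = false ∧ g (s-1) = true ∧ ∀ x, x ≠ s → x ≠ s - 1 → g x = f x := by
  subst hg
  refine ⟨Function.update_self _ _ _, ?_, ?_⟩
  · rw [Function.update_of_ne (sub_one_ne (by omega) s), Function.update_self]
  · intro x hx1 hx2
    rw [Function.update_of_ne hx1, Function.update_of_ne hx2]

lemma filter_move (hn : 3 ≤ n) {f g : Fin n → Bool} {s : Fin n}
    (h0 : f (s-1) = false) (h1 : f s = true)
    (hg : g = Function.update (Function.update f (s-1) true) s false) :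
    Finset.univ.filter (fun i => g i = true)
      = insert (s-1) (((Finset.univ.filter (fun i => f i = true))).erase s) := by
  obtain ⟨hgs, hgs1, hgo⟩ := move_eval hn g hg
  ext i
  simp only [Finset.mem_filter, Finset.mem_univ, true_and, Finset.mem_insert, Finset.mem_erase]
  constructor
  · intro hi
    by_cases h2 : i = s - 1
    · left; exact h2
    · by_cases h3 : i = s
      · rw [h3, hgs] at hi; cases hi
      · right; exact ⟨h3, by rw [← hgo i h3 h2]; exact hi⟩
  · rintro (h2 | ⟨h2, h3⟩)
    · rw [h2]; exact hgs1
    · have h4 : i ≠ s - 1 := by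
        intro h5; rw [h5, h0] at h3; cases h3
      rw [hgo i h2 h4]; exact h3
lemma cnt_move (hn : 3 ≤ n) {f g : Fin n → Bool} (h : Move f g) : cnt g = cnt f := by
  obtain ⟨s, h0, h1, hg⟩ := h
  unfold cnt
  rw [filter_move hn h0 h1 hg]
  have hsmem : s ∈ Finset.univ.filter (fun i => f i = true) := by
    simp [h1]
  have hs1mem : (s-1) ∉ (Finset.univ.filter (fun i => f i = true)).erase s := by
    simp [h0]
  rw [Finset.card_insert_of_notMem hs1mem, Finset.card_erase_of_mem hsmem]
  have : 1 ≤ (Finset.univ.filter (fun i => f i = true)).card := Finset.card_pos.mpr ⟨s, hsmem⟩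
  omega

lemma cnt_le (f : Fin n → Bool) : cnt f ≤ n := by
  calc cnt f ≤ Finset.univ.card := Finset.card_filter_le _ _
    _ = n := by simp

lemma cnt_pos_iff (f : Fin n → Bool) : 1 ≤ cnt f ↔ ∃ i, f i = true := by
  unfold cnt
  rw [Nat.succ_le, Finset.card_pos, Finset.filter_nonempty_iff]
  simp

lemma cnt_eq_n_iff (f : Fin n → Bool) : cnt f = n ↔ ∀ i, f i = true := by
  unfold cnt
  constructor
  · intro h
    have : Finset.univ.filter (fun i => f i = true) = Finset.univ :=
      Finset.eq_univ_of_card _ (by rw [h, Fintype.card_fin])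
    intro i
    have := Finset.eq_univ_iff_forall.mp this i
    simpa using this
  · intro h
    rw [Finset.filter_true_of_mem (fun i _ => h i)]
    simp

lemma nonconst_iff_cnt (f : Fin n → Bool) : NonConst f ↔ 1 ≤ cnt f ∧ cnt f ≤ n - 1 := by
  have hn1 : 1 ≤ n := Nat.pos_of_ne_zero (NeZero.ne n)
  have hle := cnt_le f
  constructor
  · rintro ⟨ht, ⟨j, hj⟩⟩
    refine ⟨(cnt_pos_iff f).mpr ht, ?_⟩
    have : cnt f ≠ n := by
      intro h
      rw [(cnt_eq_n_iff f).mp h j] at hj; cases hj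
    omega
  · rintro ⟨h1, h2⟩
    refine ⟨(cnt_pos_iff f).mp h1, ?_⟩
    have : ¬ ∀ i, f i = true := by
      intro h
      rw [(cnt_eq_n_iff f).mpr h] at h2; omega
    push_neg at this
    obtain ⟨i, hi⟩ := this
    exact ⟨i, by revert hi; cases f i <;> simp⟩

lemma natCard_eq_cnt (o : EdgeOrientation (SimpleGraph.cycleGraph n)) :
    Nat.card {i : Fin n // o.dir (i + 1) i} = cnt (ef o) := by
  classical
  have e1 : {i : Fin n // o.dir (i + 1) i} ≃ {i : Fin n // ef o i = true} :=
    Equiv.subtypeEquivRight (fun i => ef_true.symm)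
  rw [Nat.card_congr e1, Nat.card_eq_fintype_card, Fintype.card_subtype]
  rfl

end Configs


section Bridge
open EdgeOrientation

lemma fireStep_of_move (hn : 3 ≤ n) {f g : Fin n → Bool} (hnc : NonConst f) (hmv : Move f g) :
    FireStep (mkO hn f) (mkO hn g) := by
  obtain ⟨s, h0, h1, hg⟩ := hmv
  obtain ⟨hgs, hgs1, hgo⟩ := move_eval hn g hg
  have hac : (mkO hn f).Acyclic := by
    apply acyclic_of_nonconst hn
    rw [ef_mkO]
    exact hnc
  refine ⟨hac, s, ?_, ?_⟩
  · rw [isSink_iff hn, ef_mkO]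
    exact ⟨h0, h1⟩
  · funext u v
    apply propext
    show dirOf g u v ↔ fireDir s (dirOf f) u v
    unfold fireDir dirOf
    by_cases hA : v = u + 1 <;> by_cases hB : u = v + 1
    · exact absurd hB (fun hB => not_both hn u v hB hA)
    · -- v = u+1 only
      subst hA
      have hne2 : ¬ (u = u + 1 + 1) := fun h2 => not_both hn u (u+1) h2 rfl
      constructor
      · rintro (⟨-, hgu⟩ | ⟨h2, -⟩)
        · -- g u = false
          by_cases hus : u = s
          · exact Or.inl ⟨Or.inl hus, Or.inr ⟨by rw [hus], by rw [hus]; exact h1⟩⟩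
          · by_cases hus1 : u = s - 1
            · exfalso; rw [hus1, hgs1] at hgu; cases hgu
            · have hv : ¬ (u + 1 = s) := by
                intro h3
                exact hus1 (by rw [← h3]; ring)
              refine Or.inr ⟨?_, Or.inl ⟨rfl, by rw [← hgo u hus hus1]; exact hgu⟩⟩
              rintro (h3 | h3) <;> [exact hus h3; exact hv h3]
        · exact absurd h2 hne2
      · rintro (⟨hOr, hd⟩ | ⟨hnOr, hd⟩)
        · -- edges incident to s, reversed : dirOf f (u+1) u holds
          rcases hd with ⟨h2, -⟩ | ⟨-, hfu⟩
          · exact absurd h2 hne2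
          · -- f u = true ; need g u = false
            rcases hOr with hus | hvs
            · left; exact ⟨rfl, by rw [hus]; exact hgs⟩
            · -- u + 1 = s, so u = s - 1, f u = f (s-1) = false, contradiction with hfu
              exfalso
              have : u = s - 1 := by rw [← hvs]; ring
              rw [this, h0] at hfu; cases hfu
        · rcases hd with ⟨-, hfu⟩ | ⟨h2, -⟩
          · -- f u = false, u ≠ s, u+1 ≠ s so u ≠ s-1
            have hus : u ≠ s := fun h3 => hnOr (Or.inl h3)
            have hus1 : u ≠ s - 1 := by
              intro h3
              exact hnOr (Or.inr (by rw [h3]; ring))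
            left; exact ⟨rfl, by rw [hgo u hus hus1]; exact hfu⟩
          · exact absurd h2 hne2
    · -- u = v+1 only
      subst hB
      have hne2 : ¬ (v = v + 1 + 1) := fun h2 => not_both hn v (v+1) h2 rfl
      constructor
      · rintro (⟨h2, -⟩ | ⟨-, hgv⟩)
        · exact absurd h2 hne2
        · -- g v = true
          by_cases hvs : v = s
          · exfalso; rw [hvs, hgs] at hgv; cases hgv
          · by_cases hvs1 : v = s - 1
            · -- v = s-1, so u = v+1 = s : reversed edge, need dirOf f v (v+1) i.e. f v = false
              refine Or.inl ⟨Or.inl (by rw [hvs1]; ring), Or.inl ⟨rfl, by rw [hvs1]; exact h0⟩⟩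
            · have hu : ¬ (v + 1 = s) := by
                intro h3
                exact hvs1 (by rw [← h3]; ring)
              refine Or.inr ⟨?_, Or.inr ⟨rfl, by rw [← hgo v hvs hvs1]; exact hgv⟩⟩
              rintro (h3 | h3) <;> [exact hu h3; exact hvs h3]
      · rintro (⟨hOr, hd⟩ | ⟨hnOr, hd⟩)
        · rcases hd with ⟨-, hfv⟩ | ⟨h2X, -⟩
          · -- dirOf f v (v+1) : f v = false; reversed: g v = true iff v = s-1
            rcases hOr with hus | hvs
            · -- v + 1 = s so v = s - 1
              have hv : v = s - 1 := by rw [← hus]; ring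
              right; exact ⟨rfl, by rw [hv]; exact hgs1⟩
            · exfalso; rw [hvs, h1] at hfv; cases hfv
          · exact absurd h2X hne2
        · rcases hd with ⟨h2, -⟩ | ⟨-, hfv⟩
          · exact absurd h2 hne2
          · have hvs : v ≠ s := fun h3 => hnOr (Or.inr h3)
            have hvs1 : v ≠ s - 1 := by
              intro h3
              exact hnOr (Or.inl (by rw [h3]; ring))
            right; exact ⟨rfl, by rw [hgo v hvs hvs1]; exact hfv⟩
    · -- not adjacent at all: both sides false
      constructor
      · rintro (⟨h2, -⟩ | ⟨h2, -⟩) <;> [exact absurd h2 hA; exact absurd h2 hB]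
      · rintro (⟨-, ⟨h2, -⟩ | ⟨h2, -⟩⟩ | ⟨-, ⟨h2, -⟩ | ⟨h2, -⟩⟩) <;>
          [exact absurd h2 hB; exact absurd h2 hA; exact absurd h2 hA; exact absurd h2 hB]

lemma reach_of_creach (hn : 3 ≤ n) {f g : Fin n → Bool} (hnc : NonConst f) (h : CReach f g) :
    Reach (mkO hn f) (mkO hn g) ∧ NonConst g := by
  induction h with
  | refl => exact ⟨Relation.ReflTransGen.refl, hnc⟩
  | @tail b c hab hbc ih =>
    obtain ⟨ih1, ih2⟩ := ih
    have hnc2 : NonConst c := by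
      rw [nonconst_iff_cnt] at ih2 ⊢
      rw [cnt_move hn hbc]
      exact ih2
    exact ⟨Relation.ReflTransGen.tail ih1 (fireStep_of_move hn ih2 hbc), hnc2⟩

end Bridge


section Canon

def canon (k : ℕ) : Fin n → Bool := fun i => decide ((i : ℕ) < k)

lemma cnt_canon {k : ℕ} (hk : k ≤ n) : cnt (canon (n := n) k) = k := by
  unfold cnt canon
  have : (Finset.univ.filter (fun i : Fin n => decide ((i : ℕ) < k) = true)).card
      = (Finset.range k).card := by
    refine Finset.card_bij' (fun (i : Fin n) _ => (i : ℕ))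
      (fun j hj => (⟨j, lt_of_lt_of_le (Finset.mem_range.mp hj) hk⟩ : Fin n)) ?_ ?_ ?_ ?_
    · intro i hi
      simp only [Finset.mem_filter, decide_eq_true_eq] at hi
      exact Finset.mem_range.mpr hi.2
    · intro j hj
      simp only [Finset.mem_filter, Finset.mem_univ, true_and, decide_eq_true_eq]
      exact Finset.mem_range.mp hj
    · intro i hi; exact Fin.ext rfl
    · intro j hj; rfl
  rw [this, Finset.card_range]

noncomputable def mval (f : Fin n → Bool) : ℕ :=
  ∑ i ∈ Finset.univ.filter (fun i => f i = true), (i : ℕ)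

lemma mval_move (hn : 3 ≤ n) {f g : Fin n → Bool} {s : Fin n} (hs : s ≠ 0)
    (h0 : f (s-1) = false) (h1 : f s = true)
    (hg : g = Function.update (Function.update f (s-1) true) s false) :
    mval g < mval f := by
  have hsv : 1 ≤ (s : ℕ) := by
    rcases Nat.eq_zero_or_pos (s : ℕ) with h | h
    · exact absurd ((val_zero_iff s).mp h) hs
    · exact h
  have hs1v : ((s - 1 : Fin n) : ℕ) = (s : ℕ) - 1 := by
    rw [val_sub_one (by omega), if_neg (by omega)]
  have hsmem : s ∈ Finset.univ.filter (fun i => f i = true) := by simp [h1]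
  have hs1mem : (s-1) ∉ (Finset.univ.filter (fun i => f i = true)).erase s := by simp [h0]
  unfold mval
  rw [filter_move hn h0 h1 hg, Finset.sum_insert hs1mem]
  have herase : ((s:ℕ) + ∑ x ∈ (Finset.univ.filter (fun i => f i = true)).erase s, (x : ℕ))
      = ∑ x ∈ Finset.univ.filter (fun i => f i = true), (x:ℕ) :=
    Finset.add_sum_erase _ (fun i : Fin n => (i : ℕ)) hsmem
  omega

lemma canon_of_no_move (f : Fin n → Bool)
    (hc : ∀ s : Fin n, s ≠ 0 → ¬(f (s-1) = false ∧ f s = true)) :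
    f = canon (cnt f) := by
  have hn1 : 1 ≤ n := Nat.pos_of_ne_zero (NeZero.ne n)
  have hn2 : 2 ≤ n ∨ n = 1 := by omega
  have hmono : ∀ s : Fin n, s ≠ 0 → f s = true → f (s-1) = true := by
    intro s hs hfs
    by_contra h
    exact hc s hs ⟨by revert h; cases f (s-1) <;> simp, hfs⟩
  have down : ∀ m : ℕ, ∀ i : Fin n, f i = true → m ≤ (i : ℕ) →
      f ⟨(i : ℕ) - m, Nat.lt_of_le_of_lt (Nat.sub_le _ _) i.isLt⟩ = true := by
    intro m
    induction m with
    | zero =>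
      intro i hi _
      have : (⟨(i : ℕ) - 0, Nat.lt_of_le_of_lt (Nat.sub_le _ _) i.isLt⟩ : Fin n) = i :=
        Fin.ext (Nat.sub_zero _)
      rwa [this]
    | succ m ih =>
      intro i hi hm
      rcases hn2 with hn2 | hn2
      · set i' : Fin n := ⟨(i : ℕ) - m, by omega⟩ with hi'
        have hfi' : f i' = true := ih i hi (by omega)
        have hi'0 : i' ≠ 0 := by
          intro h
          have := (val_zero_iff i').mpr h
          rw [hi'] at this
          simp only at this
          omega
        have := hmono i' hi'0 hfi'
        have heq : i' - 1 = ⟨(i : ℕ) - (m+1), by omega⟩ := by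
          apply Fin.ext
          rw [val_sub_one hn2]
          rw [if_neg]
          · simp only [hi']; omega
          · intro h; rw [hi'] at h; simp only at h; omega
        rwa [heq] at this
      · exfalso; omega
  have key : ∀ i : Fin n, f i = true ↔ (i : ℕ) < cnt f := by
    intro i
    constructor
    · intro hi
      have hsub : Finset.Iic i ⊆ Finset.univ.filter (fun j => f j = true) := by
        intro j hj
        have hji : (j : ℕ) ≤ (i : ℕ) := Fin.le_def.mp (Finset.mem_Iic.mp hj)
        have := down ((i : ℕ) - (j : ℕ)) i hi (by omega)
        have heq : (⟨(i:ℕ) - ((i:ℕ) - (j:ℕ)), by omega⟩ : Fin n) = j := Fin.ext (by simp; omega)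
        rw [heq] at this
        simp [this]
      have := Finset.card_le_card hsub
      rw [Fin.card_Iic] at this
      unfold cnt
      omega
    · intro hi
      by_contra hfi
      have hfi' : f i = false := by revert hfi; cases f i <;> simp
      have hsub : Finset.univ.filter (fun j => f j = true) ⊆ Finset.Iio i := by
        intro j hj
        simp only [Finset.mem_filter] at hj
        rw [Finset.mem_Iio]
        by_contra hij
        have hij' : (i : ℕ) ≤ (j : ℕ) := Fin.le_def.mp (not_lt.mp hij)
        have := down ((j:ℕ) - (i:ℕ)) j hj.2 (by omega)
        have heq : (⟨(j:ℕ) - ((j:ℕ) - (i:ℕ)), by omega⟩ : Fin n) = i := Fin.ext (by simp; omega)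
        rw [heq, hfi'] at this
        cases this
      have := Finset.card_le_card hsub
      rw [Fin.card_Iio] at this
      unfold cnt at hi
      omega
  funext i
  unfold canon
  by_cases h : (i : ℕ) < cnt f
  · rw [(key i).mpr h]; simp [h]
  · have : f i ≠ true := fun hc2 => h ((key i).mp hc2)
    rw [decide_eq_false h]
    revert this; cases f i <;> simp

lemma bubble (hn : 3 ≤ n) (f : Fin n → Bool) : CReach f (canon (cnt f)) := by
  suffices H : ∀ N : ℕ, ∀ f : Fin n → Bool, mval f < N → CReach f (canon (cnt f)) from
    H (mval f + 1) f (Nat.lt_succ_self _)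
  intro N
  induction N with
  | zero => intro f h; exact absurd h (Nat.not_lt_zero _)
  | succ N ih =>
    intro f hN
    by_cases hc : ∀ s : Fin n, s ≠ 0 → ¬(f (s-1) = false ∧ f s = true)
    · rw [← canon_of_no_move f hc]
      exact Relation.ReflTransGen.refl
    · push_neg at hc
      obtain ⟨s, hs, h0, h1⟩ := hc
      set g := Function.update (Function.update f (s-1) true) s false with hg
      have hmv : Move f g := ⟨s, h0, h1, rfl⟩
      have hlt := mval_move hn hs h0 h1 hg
      have hr := ih g (by omega)
      rw [cnt_move hn hmv] at hr
      exact Relation.ReflTransGen.head hmv hr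

end Canon


section Symmetry

def rotc (c : Fin n) (f : Fin n → Bool) : Fin n → Bool := fun i => f (i + c)

def compl (f : Fin n → Bool) : Fin n → Bool := fun i => !(f i)

lemma rotc_rotc (c c' : Fin n) (f : Fin n → Bool) : rotc c (rotc c' f) = rotc (c' + c) f := by
  funext i; unfold rotc; rw [add_assoc, add_comm c c']

lemma rotc_zero (f : Fin n → Bool) : rotc 0 f = f := by
  funext i; unfold rotc; rw [add_zero]

lemma compl_compl (f : Fin n → Bool) : compl (compl f) = f := by
  funext i; unfold compl; simp

lemma move_rotc (hn : 3 ≤ n) (c : Fin n) {f g : Fin n → Bool} (h : Move f g) :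
    Move (rotc c f) (rotc c g) := by
  obtain ⟨s, h0, h1, hg⟩ := h
  obtain ⟨hgs, hgs1, hgo⟩ := move_eval hn g hg
  refine ⟨s - c, ?_, ?_, ?_⟩
  · show f (s - c - 1 + c) = false
    rw [show s - c - 1 + c = s - 1 from by ring]; exact h0
  · show f (s - c + c) = true
    rw [show s - c + c = s from by ring]; exact h1
  · funext i
    by_cases hi1 : i = s - c
    · rw [hi1, Function.update_self]
      show g (s - c + c) = false
      rw [show s - c + c = s from by ring]; exact hgs
    · rw [Function.update_of_ne hi1]
      by_cases hi2 : i = s - c - 1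
      · rw [hi2, Function.update_self]
        show g (s - c - 1 + c) = true
        rw [show s - c - 1 + c = s - 1 from by ring]; exact hgs1
      · rw [Function.update_of_ne hi2]
        show g (i + c) = f (i + c)
        apply hgo
        · intro hh; exact hi1 (by rw [← hh]; ring)
        · intro hh; exact hi2 (by rw [show s - c - 1 = s - 1 - c from by ring, ← hh]; ring)

lemma creach_rotc (hn : 3 ≤ n) (c : Fin n) {f g : Fin n → Bool} (h : CReach f g) :
    CReach (rotc c f) (rotc c g) :=
  Relation.ReflTransGen.lift (rotc c) (fun _ _ hab => move_rotc hn c hab) _ _ h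

lemma move_compl (hn : 3 ≤ n) {f g : Fin n → Bool} (h : Move f g) :
    Move (compl g) (compl f) := by
  obtain ⟨s, h0, h1, hg⟩ := h
  obtain ⟨hgs, hgs1, hgo⟩ := move_eval hn g hg
  refine ⟨s, ?_, ?_, ?_⟩
  · show Bool.not (g (s-1)) = false
    rw [hgs1]; rfl
  · show Bool.not (g s) = true
    rw [hgs]; rfl
  · funext i
    by_cases hi1 : i = s
    · rw [hi1, Function.update_self]
      show Bool.not (f s) = false
      rw [h1]; rfl
    · rw [Function.update_of_ne hi1]
      by_cases hi2 : i = s - 1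
      · rw [hi2, Function.update_self]
        show Bool.not (f (s-1)) = true
        rw [h0]; rfl
      · rw [Function.update_of_ne hi2]
        show Bool.not (f i) = Bool.not (g i)
        rw [hgo i hi1 hi2]

lemma creach_compl (hn : 3 ≤ n) {f g : Fin n → Bool} (h : CReach f g) :
    CReach (compl g) (compl f) := by
  induction h with
  | refl => exact Relation.ReflTransGen.refl
  | @tail b c hab hbc ih => exact Relation.ReflTransGen.head (move_compl hn hbc) ih

lemma cnt_rotc (c : Fin n) (f : Fin n → Bool) : cnt (rotc c f) = cnt f := by
  unfold cnt rotc
  refine Finset.card_bij' (fun (i : Fin n) _ => i + c) (fun (j : Fin n) _ => j - c) ?_ ?_ ?_ ?_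
  · intro i hi
    simp only [Finset.mem_filter, Finset.mem_univ, true_and] at hi ⊢
    exact hi
  · intro j hj
    simp only [Finset.mem_filter, Finset.mem_univ, true_and] at hj ⊢
    rw [show j - c + c = j from by ring]
    exact hj
  · intro i _; show i + c - c = i; ring
  · intro j _; show j - c + c = j; ring

lemma cnt_compl (f : Fin n → Bool) : cnt (compl f) = n - cnt f := by
  unfold cnt compl
  have hset : Finset.univ.filter (fun i : Fin n => (!(f i)) = true)
      = Finset.univ \ Finset.univ.filter (fun i => f i = true) := by
    ext i
    simp only [Finset.mem_filter, Finset.mem_univ, true_and, Finset.mem_sdiff]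
    cases hfi : f i <;> simp [hfi]
  rw [hset, Finset.card_sdiff_of_subset (Finset.filter_subset _ _)]
  simp

lemma compl_canon {k : ℕ} (hk : k < n) :
    compl (canon (n := n) k) = rotc (-(k : Fin n)) (canon (n - k)) := by
  funext i
  unfold compl canon rotc
  have hval : ((k : Fin n) : ℕ) = k := Fin.val_cast_of_lt hk
  rw [← decide_not, decide_eq_decide]
  rw [show i + -(k : Fin n) = i - (k : Fin n) from by ring]
  rw [val_sub, hval]
  have := i.isLt
  split_ifs <;> omega

lemma creach_of_cnt_eq (hn : 3 ≤ n) {f g : Fin n → Bool} (hnc : NonConst f)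
    (hcnt : cnt f = cnt g) : CReach f g := by
  have hbd := (nonconst_iff_cnt f).mp hnc
  set k := cnt f with hk
  have hkn : k < n := by omega
  have step1 : CReach f (canon k) := bubble hn f
  have hb : CReach (rotc (k : Fin n) (compl g)) (canon (n - k)) := by
    have hbb := bubble hn (rotc (k : Fin n) (compl g))
    rw [cnt_rotc, cnt_compl, ← hcnt] at hbb
    exact hbb
  have h2 := creach_rotc hn (-(k : Fin n)) hb
  rw [rotc_rotc] at h2
  rw [show (k : Fin n) + -(k : Fin n) = 0 from by ring, rotc_zero] at h2
  rw [← compl_canon hkn] at h2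
  have h3 := creach_compl hn h2
  rw [compl_compl, compl_compl] at h3
  exact step1.trans h3

end Symmetry


section Final
open EdgeOrientation

lemma ef_fire (hn : 3 ≤ n) {o o' : EdgeOrientation (SimpleGraph.cycleGraph n)} {s : Fin n}
    (hsink : IsSink o s) (hdir : o'.dir = fireDir s o.dir) :
    ef o' = Function.update (Function.update (ef o) (s-1) true) s false := by
  obtain ⟨hs0, hs1⟩ := (isSink_iff hn o s).mp hsink
  have hds : ¬ o.dir s (s+1) := by
    intro h
    rw [(dir_succ_iff hn o s).mp h] at hs1; cases hs1
  have hd1 : o.dir (s-1) s := by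
    have := (dir_succ_iff hn o (s-1)).mpr hs0
    rwa [show s - 1 + 1 = s from by ring] at this
  funext i
  by_cases hi1 : i = s
  · rw [hi1, Function.update_self, ef_false, hdir]
    rintro (⟨-, h⟩ | ⟨h2, -⟩)
    · exact hds h
    · exact h2 (Or.inr rfl)
  · rw [Function.update_of_ne hi1]
    by_cases hi2 : i = s - 1
    · rw [hi2, Function.update_self, ef_true, hdir]
      left
      refine ⟨Or.inl (by rw [show s - 1 + 1 = s from by ring]), ?_⟩
      rw [show s - 1 + 1 = s from by ring]
      exact hd1
    · rw [Function.update_of_ne hi2]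
      have hiff : o'.dir (i+1) i ↔ o.dir (i+1) i := by
        rw [hdir]
        have hnor : ¬ ((i+1 = s) ∨ i = s) := by
          rintro (h3 | h3)
          · exact hi2 (by rw [← h3]; ring)
          · exact hi1 h3
        constructor
        · rintro (⟨h3, -⟩ | ⟨-, h3⟩)
          · exact absurd h3 hnor
          · exact h3
        · intro h3; exact Or.inr ⟨hnor, h3⟩
      rcases hoi : ef o i with _|_
      · rw [ef_false] at hoi ⊢; exact fun h => hoi (hiff.mp h)
      · rw [ef_true] at hoi ⊢; exact hiff.mpr hoi

lemma reach_cnt (hn : 3 ≤ n) {o o' : EdgeOrientation (SimpleGraph.cycleGraph n)}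
    (h : Reach o o') : cnt (ef o') = cnt (ef o) := by
  induction h with
  | refl => rfl
  | @tail b c hab hbc ih =>
    obtain ⟨hac, s, hsink, hdir⟩ := hbc
    obtain ⟨hb0, hb1⟩ := (isSink_iff hn b s).mp hsink
    have hmv : Move (ef b) (ef c) := ⟨s, hb0, hb1, ef_fire hn hsink hdir⟩
    rw [cnt_move hn hmv, ih]

end Final

end CycleProof

open EdgeOrientation in
/-- For the cycle graph on `n ≥ 3` vertices (edges oriented "anticlockwise" meaning from
`i+1` to `i`): two acyclic orientations are reachable from each other by sink firings iff
they have the same number of anticlockwise edges; there are exactly `n - 1` reachability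
classes, of sizes `C(n,1), …, C(n,n-1)`. -/
theorem cycleGraph_reachability_classes (n : ℕ) [NeZero n] (hn : 3 ≤ n) :
    (∀ o o' : EdgeOrientation (SimpleGraph.cycleGraph n), o.Acyclic → o'.Acyclic →
      (Reach o o' ↔
        Nat.card {i : Fin n // o.dir (i + 1) i} = Nat.card {i : Fin n // o'.dir (i + 1) i})) ∧
    (∀ k : ℕ, 1 ≤ k → k ≤ n - 1 →
      Nat.card {o : EdgeOrientation (SimpleGraph.cycleGraph n) //
        o.Acyclic ∧ Nat.card {i : Fin n // o.dir (i + 1) i} = k} = n.choose k) ∧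
    Nat.card
      (Quot fun a b : {o : EdgeOrientation (SimpleGraph.cycleGraph n) // o.Acyclic} =>
        Reach a.1 b.1) = n - 1 := by
  have hn1 : 1 ≤ n := by omega
  refine ⟨?_, ?_, ?_⟩
  · intro o o' hac hac'
    rw [CycleProof.natCard_eq_cnt, CycleProof.natCard_eq_cnt]
    constructor
    · intro h
      exact (CycleProof.reach_cnt hn h).symm
    · intro h
      have hnc := CycleProof.nonconst_of_acyclic hn o hac
      have hr := (CycleProof.reach_of_creach hn hnc
        (CycleProof.creach_of_cnt_eq hn hnc h)).1
      rwa [CycleProof.mkO_ef, CycleProof.mkO_ef] at hr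
  · intro k hk1 hk2
    have e1 : {o : EdgeOrientation (SimpleGraph.cycleGraph n) //
        o.Acyclic ∧ Nat.card {i : Fin n // o.dir (i + 1) i} = k}
        ≃ {f : Fin n → Bool // CycleProof.cnt f = k} :=
      { toFun := fun o => ⟨CycleProof.ef o.1, by
          rw [← CycleProof.natCard_eq_cnt]; exact o.2.2⟩
        invFun := fun f => ⟨CycleProof.mkO hn f.1, by
          constructor
          · apply CycleProof.acyclic_of_nonconst hn
            rw [CycleProof.ef_mkO, CycleProof.nonconst_iff_cnt, f.2]
            exact ⟨hk1, hk2⟩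
          · rw [CycleProof.natCard_eq_cnt, CycleProof.ef_mkO]; exact f.2⟩
        left_inv := fun o => Subtype.ext (CycleProof.mkO_ef hn o.1)
        right_inv := fun f => Subtype.ext (CycleProof.ef_mkO hn f.1) }
    have e2 : {f : Fin n → Bool // CycleProof.cnt f = k}
        ≃ {S : Finset (Fin n) // S ∈ Finset.powersetCard k (Finset.univ : Finset (Fin n))} :=
      { toFun := fun f => ⟨Finset.univ.filter (fun i => f.1 i = true), by
          rw [Finset.mem_powersetCard_univ]; exact f.2⟩
        invFun := fun S => ⟨fun i => decide (i ∈ S.1), by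
          have hSc := (Finset.mem_powersetCard_univ).mp S.2
          have hfe : Finset.univ.filter
              (fun i : Fin n => (fun i => decide (i ∈ S.1)) i = true) = S.1 := by
            ext i; simp
          unfold CycleProof.cnt
          rw [hfe, hSc]⟩
        left_inv := fun f => Subtype.ext (funext fun i => by
          simp only [Finset.mem_filter, Finset.mem_univ, true_and]
          cases hfi : f.1 i <;> simp [hfi])
        right_inv := fun S => Subtype.ext (by ext i; simp) }
    rw [Nat.card_congr (e1.trans e2), Nat.card_eq_finsetCard,
      Finset.card_powersetCard, Finset.card_univ, Fintype.card_fin]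
  · have e3 : (Quot fun a b : {o : EdgeOrientation (SimpleGraph.cycleGraph n) // o.Acyclic} =>
        Reach a.1 b.1) ≃ {m : ℕ // m ∈ Finset.Icc 1 (n-1)} :=
      { toFun := Quot.lift
          (fun a => (⟨CycleProof.cnt (CycleProof.ef a.1), by
            rw [Finset.mem_Icc]
            exact (CycleProof.nonconst_iff_cnt _).mp
              (CycleProof.nonconst_of_acyclic hn a.1 a.2)⟩ :
            {m : ℕ // m ∈ Finset.Icc 1 (n-1)}))
          (fun a b hab => Subtype.ext ((CycleProof.reach_cnt hn hab).symm))
        invFun := fun m => Quot.mk _ ⟨CycleProof.mkO hn (CycleProof.canon m.1), by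
          apply CycleProof.acyclic_of_nonconst hn
          obtain ⟨hm1, hm2⟩ := Finset.mem_Icc.mp m.2
          rw [CycleProof.ef_mkO, CycleProof.nonconst_iff_cnt,
            CycleProof.cnt_canon (by omega)]
          exact ⟨hm1, hm2⟩⟩
        left_inv := fun x => by
          refine Quot.inductionOn x (fun a => ?_)
          apply Quot.sound
          show Reach _ a.1
          have hbd := (CycleProof.nonconst_iff_cnt _).mp
            (CycleProof.nonconst_of_acyclic hn a.1 a.2)
          have hnc_c : CycleProof.NonConst
              (CycleProof.canon (n := n) (CycleProof.cnt (CycleProof.ef a.1))) := by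
            rw [CycleProof.nonconst_iff_cnt, CycleProof.cnt_canon (by omega)]
            exact hbd
          have hcr : CycleProof.CReach
              (CycleProof.canon (CycleProof.cnt (CycleProof.ef a.1)))
              (CycleProof.ef a.1) :=
            CycleProof.creach_of_cnt_eq hn hnc_c
              (by rw [CycleProof.cnt_canon (by omega)])
          have hre := (CycleProof.reach_of_creach hn hnc_c hcr).1
          rwa [CycleProof.mkO_ef] at hre
        right_inv := fun m => Subtype.ext (by
          obtain ⟨hm1, hm2⟩ := Finset.mem_Icc.mp m.2
          show CycleProof.cnt (CycleProof.ef (CycleProof.mkO hn (CycleProof.canon m.1))) = m.1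
          rw [CycleProof.ef_mkO, CycleProof.cnt_canon (by omega)]) }
    rw [Nat.card_congr e3, Nat.card_eq_finsetCard, Nat.card_Icc]
    omega
end

section
/- Firing a sink in an acyclic orientation of a graph preserves the circulation (number of edges oriented one way minus the number oriented the other way) around every cycle of the graph. -/
open EdgeOrientation in
/-- The circulation of an orientation around a closed walk `w` (with its traversal
direction): the number of edges of `w` oriented with the traversal minus the number
oriented against it. -/
noncomputable def EdgeOrientation.circulation {V : Type*} {G : SimpleGraph V}
    (o : EdgeOrientation G) {v : V} (w : G.Walk v v) : ℤ :=
  ((w.darts.countP fun d => @decide (o.dir d.fst d.snd) (Classical.propDecidable _)) : ℤ) -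
  ((w.darts.countP fun d => @decide (o.dir d.snd d.fst) (Classical.propDecidable _)) : ℤ)

noncomputable def fireInd {V : Type*} (s u : V) : ℤ :=
  @ite ℤ (u = s) (Classical.propDecidable _) 1 0

lemma fireInd_self {V : Type*} (s : V) : fireInd s s = 1 := by
  unfold fireInd; rw [if_pos rfl]

lemma fireInd_ne {V : Type*} {s u : V} (h : u ≠ s) : fireInd s u = 0 := by
  unfold fireInd; rw [if_neg h]

open EdgeOrientation in
lemma fire_aux {V : Type*} {G : SimpleGraph V} (o o' : EdgeOrientation G)
    (s : V) (hs : o.IsSink s) (ho' : o'.dir = fireDir s o.dir) :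
    ∀ {a b : V} (p : G.Walk a b),
      ((p.darts.countP fun d => @decide (o'.dir d.fst d.snd) (Classical.propDecidable _)) : ℤ)
      - ((p.darts.countP fun d => @decide (o'.dir d.snd d.fst) (Classical.propDecidable _)) : ℤ)
      = ((p.darts.countP fun d => @decide (o.dir d.fst d.snd) (Classical.propDecidable _)) : ℤ)
      - ((p.darts.countP fun d => @decide (o.dir d.snd d.fst) (Classical.propDecidable _)) : ℤ)
      + 2 * (fireInd s a - fireInd s b) := by
  intro a b p
  induction p with
  | nil => simp
  | @cons a x b h p ih =>
    have hax : a ≠ x := h.ne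
    simp only [SimpleGraph.Walk.darts_cons, List.countP_cons, decide_eq_true_eq]
    by_cases ha : a = s
    · subst ha
      have hx : x ≠ a := fun hx => hax (hx ▸ rfl)
      have h1 : ¬ o.dir a x := hs x
      have h2 : o.dir x a := ((o.dir_total x a h.symm).mpr) (by simpa using h1)
      have h3 : o'.dir a x := by
        rw [ho']; exact Or.inl ⟨Or.inl rfl, h2⟩
      have h4 : ¬ o'.dir x a := by
        rw [ho']
        rintro (⟨_, hd⟩ | ⟨hns, _⟩)
        · exact h1 hd
        · exact hns (Or.inr rfl)
      rw [@decide_eq_true _ (Classical.propDecidable _) h3,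
          @decide_eq_true _ (Classical.propDecidable _) h2,
          @decide_eq_false _ (Classical.propDecidable _) h1,
          @decide_eq_false _ (Classical.propDecidable _) h4,
          fireInd_self]
      rw [fireInd_ne hx] at ih
      norm_num
      push_cast at ih ⊢
      omega
    · by_cases hx : x = s
      · subst hx
        have h1 : ¬ o.dir x a := hs a
        have h2 : o.dir a x := ((o.dir_total a x h).mpr) (by simpa using h1)
        have h3 : ¬ o'.dir a x := by
          rw [ho']
          rintro (⟨_, hd⟩ | ⟨hns, _⟩)
          · exact h1 hd
          · exact hns (Or.inr rfl)
        have h4 : o'.dir x a := by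
          rw [ho']; exact Or.inl ⟨Or.inl rfl, h2⟩
        rw [@decide_eq_true _ (Classical.propDecidable _) h2,
            @decide_eq_true _ (Classical.propDecidable _) h4,
            @decide_eq_false _ (Classical.propDecidable _) h1,
            @decide_eq_false _ (Classical.propDecidable _) h3,
            fireInd_ne ha]
        rw [fireInd_self] at ih
        norm_num
        push_cast at ih ⊢
        omega
      · have hns : ¬ (a = s ∨ x = s) := by tauto
        have hns' : ¬ (x = s ∨ a = s) := by tauto
        have h3 : o'.dir a x ↔ o.dir a x := by
          rw [ho']
          constructor
          · rintro (⟨hd, _⟩ | ⟨_, hd⟩)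
            · exact absurd hd hns
            · exact hd
          · intro hd; exact Or.inr ⟨hns, hd⟩
        have h4 : o'.dir x a ↔ o.dir x a := by
          rw [ho']
          constructor
          · rintro (⟨hd, _⟩ | ⟨_, hd⟩)
            · exact absurd hd hns'
            · exact hd
          · intro hd; exact Or.inr ⟨hns', hd⟩
        rw [@decide_eq_decide _ _ (Classical.propDecidable _) (Classical.propDecidable _) |>.mpr h3,
            @decide_eq_decide _ _ (Classical.propDecidable _) (Classical.propDecidable _) |>.mpr h4,
            fireInd_ne ha]
        rw [fireInd_ne hx] at ih
        push_cast at ih ⊢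
        omega

open EdgeOrientation in
/-- Firing a sink in an acyclic orientation preserves the circulation around every
cycle of the graph. -/
theorem fireStep_preserves_circulation {V : Type*} [Fintype V] {G : SimpleGraph V}
    (o o' : EdgeOrientation G) (h : FireStep o o')
    {v : V} (w : G.Walk v v) (hw : w.IsCycle) :
    o'.circulation w = o.circulation w := by
  obtain ⟨-, s, hs, ho'⟩ := h
  have := fire_aux o o' s hs ho' w
  simp only [sub_self, mul_zero, add_zero] at this
  unfold EdgeOrientation.circulation
  exact this
end

section
/- Let G be a connected graph, T its trunk (the subgraph obtained by iteratively deleting leaves), and consider an acyclic edge orientation of G. If the orientations of the edges not in the trunk (limb edges) are changed arbitrarily, the resulting orientation is still acyclic and lies in the same reachability class under sink firing. -/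
/-- The trunk (2-core) of a graph: the set of vertices surviving iterated deletion of
leaves, i.e. the vertices belonging to some set of vertices within which every vertex
has at least two neighbours. The trunk edges are exactly the edges with both endpoints
in the trunk; the remaining edges are the limb edges. -/
def SimpleGraph.trunk {V : Type*} (G : SimpleGraph V) : Set V :=
  {v | ∃ A : Set V, v ∈ A ∧
    ∀ u ∈ A, ∃ x ∈ A, ∃ y ∈ A, x ≠ y ∧ G.Adj u x ∧ G.Adj u y}
open EdgeOrientation

section Aux
variable {V : Type*} {G : SimpleGraph V}

lemma EdgeOrientation.antisymm (o : EdgeOrientation G) {x y : V} (h : o.dir x y) :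
    ¬ o.dir y x := (o.dir_total x y (o.dir_adj x y h)).mp h

lemma mem_trunk_of_loop (d : V → V → Prop) (hadj : ∀ x y, d x y → G.Adj x y)
    (hanti : ∀ x y, d x y → ¬ d y x) {v u : V}
    (h1 : Relation.TransGen d v u) (h2 : Relation.TransGen d u v) : u ∈ G.trunk := by
  classical
  refine ⟨{w | Relation.TransGen d v w ∧ Relation.TransGen d w v}, ⟨h1, h2⟩, ?_⟩
  rintro w ⟨hvw, hwv⟩
  obtain ⟨x, hwx, hxv⟩ := Relation.TransGen.head'_iff.mp hwv
  obtain ⟨y, hvy, hyw⟩ := Relation.TransGen.tail'_iff.mp hvw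
  have hvv : Relation.TransGen d v v := hvw.trans hwv
  have hxA : Relation.TransGen d v x ∧ Relation.TransGen d x v := by
    refine ⟨hvw.tail hwx, ?_⟩
    rcases Relation.reflTransGen_iff_eq_or_transGen.mp hxv with rfl | h
    · exact hvv
    · exact h
  have hyA : Relation.TransGen d v y ∧ Relation.TransGen d y v := by
    refine ⟨?_, Relation.TransGen.head hyw hwv⟩
    rcases Relation.reflTransGen_iff_eq_or_transGen.mp hvy with rfl | h
    · exact hvv
    · exact h
  refine ⟨x, hxA, y, hyA, ?_, hadj _ _ hwx, (hadj _ _ hyw).symm⟩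
  rintro rfl
  exact hanti _ _ hwx hyw

end Aux

lemma acyclic_of_trunk_agree {V : Type*} {G : SimpleGraph V}
    (o o' : EdgeOrientation G) (hacyc : o.Acyclic)
    (hagree : ∀ u v, u ∈ G.trunk → v ∈ G.trunk → (o'.dir u v ↔ o.dir u v)) :
    o'.Acyclic := by
  intro v hv
  have hanti : ∀ x y, o'.dir x y → ¬ o'.dir y x := fun x y h => o'.antisymm h
  have key : ∀ u, Relation.TransGen o'.dir v u → Relation.TransGen o'.dir u v →
      Relation.TransGen o.dir v u := by
    intro u h1 h2
    induction h1 with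
    | single h =>
        have hv' : v ∈ G.trunk :=
          mem_trunk_of_loop o'.dir o'.dir_adj hanti h2 (Relation.TransGen.single h)
        have hu' : _ ∈ G.trunk :=
          mem_trunk_of_loop o'.dir o'.dir_adj hanti (Relation.TransGen.single h) h2
        exact Relation.TransGen.single ((hagree _ _ hv' hu').mp h)
    | tail hvb hbc ih =>
        rename_i b c
        have hbv : Relation.TransGen o'.dir b v := Relation.TransGen.head hbc h2
        have hb : b ∈ G.trunk := mem_trunk_of_loop o'.dir o'.dir_adj hanti hvb hbv
        have hc : c ∈ G.trunk :=
          mem_trunk_of_loop o'.dir o'.dir_adj hanti (hvb.tail hbc) h2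
        exact (ih hbv).tail ((hagree _ _ hb hc).mp hbc)
  exact hacyc v (key v hv hv)

lemma fire_acyclic {V : Type*} {G : SimpleGraph V} (o : EdgeOrientation G)
    (hac : o.Acyclic) (s : V) (hs : o.IsSink s) :
    ∀ v, ¬ Relation.TransGen (EdgeOrientation.fireDir s o.dir) v v := by
  set d' := EdgeOrientation.fireDir s o.dir with hd'
  have no_in : ∀ x, ¬ d' x s := by
    rintro x (⟨_, h⟩ | ⟨hne, h⟩)
    · exact hs x h
    · exact hne (Or.inr rfl)
  have step : ∀ x y, d' x y → x ≠ s → o.dir x y := by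
    rintro x y (⟨hor, h⟩ | ⟨hne, h⟩) hx
    · rcases hor with rfl | rfl
      · exact absurd rfl hx
      · exact absurd h (hs _)
    · exact h
  have tgt : ∀ x y, d' x y → y ≠ s := by
    rintro x y h rfl; exact no_in x h
  have transfer : ∀ a b, a ≠ s → Relation.TransGen d' a b → Relation.TransGen o.dir a b := by
    intro a b ha h
    induction h with
    | single h => exact Relation.TransGen.single (step _ _ h ha)
    | tail h1 h2 ih =>
        exact (ih).tail (step _ _ h2 (tgt _ _ (Relation.TransGen.tail'_iff.mp h1).choose_spec.2))
  intro v hv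
  by_cases hvs : v = s
  · subst hvs
    cases hv with
    | single h => exact no_in _ h
    | tail h1 h2 => exact no_in _ h2
  · exact hac v (transfer v v hvs hv)

lemma exists_local_sink {V : Type*} [Fintype V] (d : V → V → Prop)
    (hac : ∀ v, ¬ Relation.TransGen d v v) (S : Set V) (hS : S.Nonempty) :
    ∃ w ∈ S, ∀ x ∈ S, ¬ Relation.TransGen d w x := by
  classical
  have : IsTrans V (fun a b => Relation.TransGen d b a) :=
    ⟨fun a b c h1 h2 => h2.trans h1⟩
  have : IsIrrefl V (fun a b => Relation.TransGen d b a) := ⟨fun a => hac a⟩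
  have wf : WellFounded (fun a b => Relation.TransGen d b a) :=
    Finite.wellFounded_of_trans_of_irrefl _
  obtain ⟨m, hm, hmin⟩ := wf.has_min S hS
  exact ⟨m, hm, fun x hx h => hmin x hx h⟩

lemma trunk_of_path_back {V : Type*} {G : SimpleGraph V} {u v : V} (huv : G.Adj u v)
    (h : Relation.ReflTransGen
      (fun x y => G.Adj x y ∧ ¬((x = u ∧ y = v) ∨ (x = v ∧ y = u))) v u) :
    u ∈ G.trunk ∧ v ∈ G.trunk := by
  classical
  set G' := G.deleteEdges {s(u,v)} with hG'
  have hsub : ∀ x y, (G.Adj x y ∧ ¬((x = u ∧ y = v) ∨ (x = v ∧ y = u))) → G'.Adj x y := by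
    rintro x y ⟨hadj, hne⟩
    rw [hG', SimpleGraph.deleteEdges_adj]
    refine ⟨hadj, ?_⟩
    simp only [Set.mem_singleton_iff, Sym2.eq_iff]
    exact hne
  have hreach : G'.Reachable v u :=
    (SimpleGraph.reachable_iff_reflTransGen v u).mpr (Relation.ReflTransGen.mono (fun a b hab => hsub a b hab) v u h)
  obtain ⟨w⟩ := hreach
  set p : G'.Walk v u := (w.toPath : G'.Path v u).1 with hp
  have hpath : p.IsPath := w.toPath.2
  set l := p.support with hl
  have hnd : l.Nodup := hpath.support_nodup
  have hch : List.Chain' G'.Adj l := p.isChain_adj_support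
  have hnil : l ≠ [] := p.support_ne_nil
  have hlen : 1 ≤ l.length := by
    rw [hl, SimpleGraph.Walk.length_support]; omega
  have hget0 : ∀ h0 : 0 < l.length, l.get ⟨0, h0⟩ = v := by
    intro h0
    simp only [List.get_eq_getElem]
    rw [← List.head_eq_getElem_zero hnil]
    exact p.head_support
  have hgetlast : ∀ hlast : l.length - 1 < l.length, l.get ⟨l.length - 1, hlast⟩ = u := by
    intro hlast
    simp only [List.get_eq_getElem]
    rw [← List.getLast_eq_getElem hnil]
    exact p.getLast_support
  have hG'uv : ¬ G'.Adj v u := by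
    rw [hG', SimpleGraph.deleteEdges_adj]
    simp [Sym2.eq_iff]
  have hne : u ≠ v := huv.ne
  have hn3 : 3 ≤ l.length := by
    by_contra hlt
    have h12 : l.length = 1 ∨ l.length = 2 := by omega
    rcases h12 with hh | hh
    · apply hne
      have heq : (⟨0, by omega⟩ : Fin l.length) = ⟨l.length - 1, by omega⟩ := by
        apply Fin.ext; show 0 = l.length - 1; omega
      exact (hgetlast (by omega)).symm.trans ((congrArg l.get heq).symm.trans (hget0 (by omega)))
    · apply hG'uv
      have hc : G'.Adj (l.get ⟨0, by omega⟩) (l.get ⟨0 + 1, by omega⟩) :=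
          List.isChain_iff_getElem.mp hch 0 (by omega)
      rw [hget0 _] at hc
      have heq : (⟨0+1, by omega⟩ : Fin l.length) = ⟨l.length - 1, by omega⟩ := by
        apply Fin.ext; show 1 = l.length - 1; omega
      rw [heq, hgetlast _] at hc
      exact hc
  have hadj' : ∀ x y, G'.Adj x y → G.Adj x y := fun x y hxy => by
    rw [hG', SimpleGraph.deleteEdges_adj] at hxy; exact hxy.1
  set A : Set V := {x | x ∈ l} with hA
  have humem : u ∈ A := by
    rw [hA]; exact (hgetlast (by omega) ▸ List.get_mem l _)
  have hvmem : v ∈ A := by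
    rw [hA]; exact (hget0 (by omega) ▸ List.get_mem l _)
  have hwit : ∀ w ∈ A, ∃ x ∈ A, ∃ y ∈ A, x ≠ y ∧ G.Adj w x ∧ G.Adj w y := by
    intro z hz
    obtain ⟨i, hi⟩ := List.mem_iff_get.mp hz
    by_cases h0 : (i : ℕ) = 0
    · -- z = v
      have hzv : z = v := by
        rw [← hi, ← hget0 (by omega)]; congr 1; exact Fin.ext h0
      subst hzv
      refine ⟨l.get ⟨1, by omega⟩, List.get_mem l _, u, humem, ?_, ?_, huv.symm⟩
      · intro hcontr
        have heq : (⟨1, by omega⟩ : Fin l.length) = ⟨l.length - 1, by omega⟩ :=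
          hnd.get_inj_iff.mp (by rw [hcontr, hgetlast _])
        have hval : (1 : ℕ) = l.length - 1 := congrArg Fin.val heq
        omega
      · have hc : G'.Adj (l.get ⟨0, by omega⟩) (l.get ⟨0 + 1, by omega⟩) :=
          List.isChain_iff_getElem.mp hch 0 (by omega)
        rw [hget0 _] at hc
        exact hadj' _ _ hc
    · by_cases hlast : (i : ℕ) = l.length - 1
      · -- z = u
        have hzu : z = u := by
          rw [← hi, ← hgetlast (by omega)]; congr 1; exact Fin.ext hlast
        subst hzu
        refine ⟨l.get ⟨l.length - 2, by omega⟩, List.get_mem l _, v, hvmem, ?_, ?_, huv⟩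
        · intro hcontr
          have heq : (⟨l.length - 2, by omega⟩ : Fin l.length) = ⟨0, by omega⟩ :=
            hnd.get_inj_iff.mp (by rw [hcontr, hget0 _])
          have hval : l.length - 2 = (0 : ℕ) := congrArg Fin.val heq
          omega
        · have hc : G'.Adj (l.get ⟨(l.length - 2), by omega⟩) (l.get ⟨(l.length - 2) + 1, by omega⟩) :=
          List.isChain_iff_getElem.mp hch (l.length - 2) (by omega)
          have heq : (⟨l.length - 2 + 1, by omega⟩ : Fin l.length)
              = ⟨l.length - 1, by omega⟩ := by
            apply Fin.ext; show l.length - 2 + 1 = l.length - 1; omega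
          rw [heq, hgetlast _] at hc
          exact (hadj' _ _ hc).symm
      · -- internal vertex
        have hilt : (i : ℕ) < l.length := i.isLt
        refine ⟨l.get ⟨(i : ℕ) - 1, by omega⟩, List.get_mem l _,
          l.get ⟨(i : ℕ) + 1, by omega⟩, List.get_mem l _, ?_, ?_, ?_⟩
        · intro hcontr
          have heq := hnd.get_inj_iff.mp hcontr
          have hval : (i : ℕ) - 1 = (i : ℕ) + 1 := congrArg Fin.val heq
          omega
        · have hc : G'.Adj (l.get ⟨((i : ℕ) - 1), by omega⟩) (l.get ⟨((i : ℕ) - 1) + 1, by omega⟩) :=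
          List.isChain_iff_getElem.mp hch ((i : ℕ) - 1) (by omega)
          have heq : (⟨(i : ℕ) - 1 + 1, by omega⟩ : Fin l.length) = i := by
            apply Fin.ext; show (i : ℕ) - 1 + 1 = (i : ℕ); omega
          rw [heq, hi] at hc
          exact (hadj' _ _ hc).symm
        · have hc : G'.Adj (l.get ⟨(i : ℕ), by omega⟩) (l.get ⟨(i : ℕ) + 1, by omega⟩) :=
          List.isChain_iff_getElem.mp hch (i : ℕ) (by omega)
          have heq : (⟨(i : ℕ), by omega⟩ : Fin l.length) = i := by
            apply Fin.ext; rfl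
          rw [heq, hi] at hc
          exact hadj' _ _ hc
  exact ⟨⟨A, humem, hwit⟩, ⟨A, hvmem, hwit⟩⟩

/-- The orientation obtained from `o` by reversing all edges between `F` and its
complement. -/
def flipDirSet {V : Type*} {G : SimpleGraph V} (o : EdgeOrientation G) (F : Set V) :
    V → V → Prop :=
  fun x y => (o.dir x y ∧ ((x ∈ F) ↔ (y ∈ F))) ∨ (o.dir y x ∧ ¬((x ∈ F) ↔ (y ∈ F)))

def oFire {V : Type*} {G : SimpleGraph V} (o : EdgeOrientation G) (F : Set V) :
    EdgeOrientation G where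
  dir := flipDirSet o F
  dir_adj := by
    rintro x y (⟨h, _⟩ | ⟨h, _⟩)
    · exact o.dir_adj _ _ h
    · exact (o.dir_adj _ _ h).symm
  dir_total := by
    intro x y hadj
    have h1 := o.dir_total x y hadj
    have h2 := o.dir_total y x hadj.symm
    unfold flipDirSet
    tauto

lemma flipDirSet_insert {V : Type*} {G : SimpleGraph V} (o : EdgeOrientation G)
    (F : Set V) (w : V) (hw : w ∉ F) :
    flipDirSet o (insert w F) = EdgeOrientation.fireDir w (flipDirSet o F) := by
  have hww : ¬ o.dir w w := fun h => G.loopless.irrefl w (o.dir_adj _ _ h)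
  funext x y
  apply propext
  simp only [flipDirSet, EdgeOrientation.fireDir, Set.mem_insert_iff]
  by_cases hx : x = w <;> by_cases hy : y = w
  · subst hx; subst hy; tauto
  · subst hx; tauto
  · subst hy; tauto
  · tauto

lemma reach_flip {V : Type*} [Fintype V] {G : SimpleGraph V} (o : EdgeOrientation G)
    (hac : o.Acyclic) {u v : V} (hd : o.dir u v)
    (hu : ¬ Relation.ReflTransGen
      (fun x y => G.Adj x y ∧ ¬((x = u ∧ y = v) ∨ (x = v ∧ y = u))) v u) :
    ∃ o₂ : EdgeOrientation G,
      (∀ x y, o₂.dir x y ↔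
        ((o.dir x y ∧ ¬((x = u ∧ y = v) ∨ (x = v ∧ y = u))) ∨ (x = v ∧ y = u)))
      ∧ EdgeOrientation.Reach o o₂ ∧ o₂.Acyclic := by
  classical
  set R : V → V → Prop :=
    fun x y => G.Adj x y ∧ ¬((x = u ∧ y = v) ∨ (x = v ∧ y = u)) with hR
  set C : Set V := {x | Relation.ReflTransGen R v x} with hC
  have hvC : v ∈ C := Relation.ReflTransGen.refl
  have huC : u ∉ C := hu
  have hCC : ∀ x y, x ∈ C → G.Adj x y → ¬((x = u ∧ y = v) ∨ (x = v ∧ y = u)) → y ∈ C :=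
    fun x y hx hadj hcond => Relation.ReflTransGen.tail hx ⟨hadj, hcond⟩
  have key : ∀ n : ℕ, ∀ F : Set V, F ⊆ C →
      (∀ t ∈ F, ∀ y, o.dir t y → y ∈ F) → (C \ F).ncard = n →
      ∀ oF : EdgeOrientation G, oF.dir = flipDirSet o F → oF.Acyclic →
      ∃ oC : EdgeOrientation G, oC.dir = flipDirSet o C ∧
        EdgeOrientation.Reach oF oC ∧ oC.Acyclic := by
    intro n
    induction n with
    | zero =>
        intro F hFC hclosed hcard oF hdir hacF
        have hempty : C \ F = ∅ := Set.ncard_eq_zero (Set.toFinite _) |>.mp hcard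
        have hFC' : F = C := subset_antisymm hFC (Set.diff_eq_empty.mp hempty)
        exact ⟨oF, by rw [hdir, hFC'], Relation.ReflTransGen.refl, hacF⟩
    | succ n ih =>
        intro F hFC hclosed hcard oF hdir hacF
        have hne : (C \ F).Nonempty := Set.nonempty_of_ncard_ne_zero (by omega)
        obtain ⟨w, ⟨hwC, hwF⟩, hmax⟩ := exists_local_sink o.dir hac (C \ F) hne
        -- `w` is a sink of `oF`
        have hsink : oF.IsSink w := by
          intro t ht
          rw [hdir] at ht
          rcases ht with ⟨hwt, hiff⟩ | ⟨htw, hniff⟩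
          · have htF : t ∉ F := fun htF => hwF (hiff.mpr htF)
            have htC : t ∈ C := by
              by_contra htC
              have hcond : (w = u ∧ t = v) ∨ (w = v ∧ t = u) := by
                by_contra hcond
                exact htC (hCC w t hwC (o.dir_adj _ _ hwt) hcond)
              rcases hcond with ⟨rfl, rfl⟩ | ⟨rfl, rfl⟩
              · exact huC hwC
              · exact o.antisymm hd hwt
            exact hmax t ⟨htC, htF⟩ (Relation.TransGen.single hwt)
          · have htF : t ∈ F := by
              by_contra htF
              exact hniff ⟨fun h => absurd h hwF, fun h => absurd h htF⟩
            exact hwF (hclosed t htF w htw)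
        -- fire `w`
        set oF' : EdgeOrientation G := oFire o (insert w F) with hoF'
        have hfire : oF'.dir = EdgeOrientation.fireDir w oF.dir := by
          rw [hdir]
          exact flipDirSet_insert o F w hwF
        have hstep : EdgeOrientation.FireStep oF oF' := ⟨hacF, w, hsink, hfire⟩
        have hacF' : oF'.Acyclic := by
          intro z hz
          rw [hfire] at hz
          exact fire_acyclic oF hacF w hsink z hz
        have hFC' : insert w F ⊆ C := Set.insert_subset hwC hFC
        have hclosed' : ∀ t ∈ insert w F, ∀ y, o.dir t y → y ∈ insert w F := by
          intro t ht y hty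
          rcases Set.mem_insert_iff.mp ht with rfl | htF
          · by_contra hyI
            have hyF : y ∉ F := fun h => hyI (Set.mem_insert_of_mem _ h)
            have hyw : y ≠ t := fun h => hyI (h ▸ Set.mem_insert _ _)
            have hyC : y ∈ C := by
              by_contra hyC
              have hcond : (t = u ∧ y = v) ∨ (t = v ∧ y = u) := by
                by_contra hcond
                exact hyC (hCC t y hwC (o.dir_adj _ _ hty) hcond)
              rcases hcond with ⟨rfl, rfl⟩ | ⟨rfl, rfl⟩
              · exact huC hwC
              · exact o.antisymm hd hty
            exact hmax y ⟨hyC, hyF⟩ (Relation.TransGen.single hty)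
          · exact Set.mem_insert_of_mem _ (hclosed t htF y hty)
        have hcard' : (C \ insert w F).ncard = n := by
          have hdiff : C \ insert w F = (C \ F) \ {w} := by
            ext z
            simp only [Set.mem_diff, Set.mem_insert_iff, Set.mem_singleton_iff]
            tauto
          have hmem : w ∈ C \ F := Set.mem_diff_of_mem hwC hwF
          rw [hdiff, Set.ncard_diff_singleton_of_mem hmem, hcard]
          omega
        obtain ⟨oC, hdirC, hreachC, hacC⟩ :=
          ih (insert w F) hFC' hclosed' hcard' oF' rfl hacF'
        exact ⟨oC, hdirC, Relation.ReflTransGen.head hstep hreachC, hacC⟩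
  have hstart : o.dir = flipDirSet o (∅ : Set V) := by
    funext x y
    apply propext
    simp [flipDirSet]
  obtain ⟨oC, hdirC, hreach, hacC⟩ :=
    key (C \ ∅).ncard ∅ (Set.empty_subset _) (by simp) rfl o hstart hac
  refine ⟨oC, ?_, hreach, hacC⟩
  intro x y
  rw [hdirC]
  simp only [flipDirSet]
  constructor
  · rintro (⟨hdxy, hiff⟩ | ⟨hdyx, hniff⟩)
    · left
      refine ⟨hdxy, ?_⟩
      rintro (⟨rfl, rfl⟩ | ⟨rfl, rfl⟩)
      · exact huC (hiff.mpr hvC)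
      · exact o.antisymm hd hdxy
    · have hadj : G.Adj x y := (o.dir_adj _ _ hdyx).symm
      have hcond : (x = u ∧ y = v) ∨ (x = v ∧ y = u) := by
        by_contra hcond
        have hcond' : ¬((y = u ∧ x = v) ∨ (y = v ∧ x = u)) := by tauto
        exact hniff ⟨fun hx => hCC x y hx hadj hcond, fun hy => hCC y x hy hadj.symm hcond'⟩
      rcases hcond with ⟨rfl, rfl⟩ | ⟨rfl, rfl⟩
      · exact absurd hdyx (o.antisymm hd)
      · right; exact ⟨rfl, rfl⟩
  · rintro (⟨hdxy, hcond⟩ | ⟨rfl, rfl⟩)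
    · left
      have hadj : G.Adj x y := o.dir_adj _ _ hdxy
      have hcond' : ¬((y = u ∧ x = v) ∨ (y = v ∧ x = u)) := by tauto
      exact ⟨hdxy, ⟨fun hx => hCC x y hx hadj hcond, fun hy => hCC y x hy hadj.symm hcond'⟩⟩
    · right
      exact ⟨hd, fun hiff => huC (hiff.mp hvC)⟩

lemma EdgeOrientation.ext'_s10 {V : Type*} {G : SimpleGraph V}
    {o₁ o₂ : EdgeOrientation G} (h : o₁.dir = o₂.dir) : o₁ = o₂ := by
  cases o₁; cases o₂; simp_all


open EdgeOrientation in
/-- If, in an acyclic edge orientation of a finite connected graph, the orientations of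
the limb edges (edges not in the trunk) are changed arbitrarily, the resulting
orientation is still acyclic and lies in the same reachability class under sink firing. -/
theorem limb_redirection {V : Type*} [Fintype V] {G : SimpleGraph V}
    (hconn : G.Connected) (o o' : EdgeOrientation G) (hacyc : o.Acyclic)
    (hagree : ∀ u v, u ∈ G.trunk → v ∈ G.trunk → (o'.dir u v ↔ o.dir u v)) :
    o'.Acyclic ∧ Reach o o' := by
  classical
  refine ⟨acyclic_of_trunk_agree o o' hacyc hagree, ?_⟩
  have main : ∀ n : ℕ, ∀ o o' : EdgeOrientation G, o.Acyclic →
      (∀ u v, u ∈ G.trunk → v ∈ G.trunk → (o'.dir u v ↔ o.dir u v)) →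
      ({p : V × V | ¬(o'.dir p.1 p.2 ↔ o.dir p.1 p.2)}).ncard ≤ n → Reach o o' := by
    intro n
    induction n with
    | zero =>
        intro o o' hac hag hcard
        have hempty : {p : V × V | ¬(o'.dir p.1 p.2 ↔ o.dir p.1 p.2)} = ∅ :=
          Set.ncard_eq_zero (Set.toFinite _) |>.mp (Nat.le_zero.mp hcard)
        have hdir : o'.dir = o.dir := by
          funext x y
          apply propext
          by_contra hne
          have hmem' : (x, y) ∈ {p : V × V | ¬(o'.dir p.1 p.2 ↔ o.dir p.1 p.2)} := hne
          rw [hempty] at hmem'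
          exact hmem'
        rw [EdgeOrientation.ext'_s10 hdir]
        exact Relation.ReflTransGen.refl
    | succ n ih =>
        intro o o' hac hag hcard
        by_cases hemp : {p : V × V | ¬(o'.dir p.1 p.2 ↔ o.dir p.1 p.2)} = ∅
        · have hdir : o'.dir = o.dir := by
            funext x y
            apply propext
            by_contra hne
            have hmem' : (x, y) ∈ {p : V × V | ¬(o'.dir p.1 p.2 ↔ o.dir p.1 p.2)} := hne
            rw [hemp] at hmem'
            exact hmem'
          rw [EdgeOrientation.ext'_s10 hdir]
          exact Relation.ReflTransGen.refl
        · obtain ⟨⟨x, y⟩, hxy⟩ := Set.nonempty_iff_ne_empty.mpr hemp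
          simp only [Set.mem_setOf_eq] at hxy
          -- pick oriented differing edge (u,v) with o.dir u v
          obtain ⟨u, v, houv, ho'uv, hmem⟩ :
              ∃ u v, o.dir u v ∧ ¬ o'.dir u v ∧
                ((u, v) = (x, y) ∨ (v, u) = (x, y)) := by
            by_cases hdxy : o.dir x y
            · refine ⟨x, y, hdxy, fun h => hxy ⟨fun _ => hdxy, fun _ => h⟩, Or.inl rfl⟩
            · have ho'xy : o'.dir x y := by
                by_contra h
                exact hxy ⟨fun h' => absurd h' h, fun h' => absurd h' hdxy⟩
              have hadj : G.Adj x y := o'.dir_adj _ _ ho'xy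
              have hdyx : o.dir y x := (o.dir_total y x hadj.symm).mpr hdxy
              exact ⟨y, x, hdyx, o'.antisymm ho'xy, Or.inr rfl⟩
          have hadj : G.Adj u v := o.dir_adj _ _ houv
          have hnt : ¬(u ∈ G.trunk ∧ v ∈ G.trunk) := by
            rintro ⟨h1, h2⟩
            exact ho'uv ((hag u v h1 h2).mpr houv)
          have huC : ¬ Relation.ReflTransGen
              (fun a b => G.Adj a b ∧ ¬((a = u ∧ b = v) ∨ (a = v ∧ b = u))) v u := by
            intro h
            exact hnt (trunk_of_path_back hadj h)
          obtain ⟨o₂, hdir₂, hreach₂, hac₂⟩ := reach_flip o hac houv huC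
          -- o₂ agrees with o' on the trunk
          have hag₂ : ∀ a b, a ∈ G.trunk → b ∈ G.trunk → (o'.dir a b ↔ o₂.dir a b) := by
            intro a b ha hb
            rw [hdir₂]
            have hcond : ¬((a = u ∧ b = v) ∨ (a = v ∧ b = u)) := by
              rintro (⟨rfl, rfl⟩ | ⟨rfl, rfl⟩)
              · exact hnt ⟨ha, hb⟩
              · exact hnt ⟨hb, ha⟩
            rw [hag a b ha hb]
            constructor
            · intro h; exact Or.inl ⟨h, hcond⟩
            · rintro (⟨h, _⟩ | hvu)
              · exact h
              · exact absurd (Or.inr hvu) hcond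
          -- measure decreases
          have ho₂uv : ¬ o₂.dir u v := by
            rw [hdir₂]
            rintro (⟨_, hc⟩ | ⟨h1, h2⟩)
            · exact hc (Or.inl ⟨rfl, rfl⟩)
            · exact hadj.ne h1
          have ho₂vu : o₂.dir v u := by
            rw [hdir₂]; right; exact ⟨rfl, rfl⟩
          have ho'vu : o'.dir v u := (o'.dir_total v u hadj.symm).mpr ho'uv
          have hsub : {p : V × V | ¬(o'.dir p.1 p.2 ↔ o₂.dir p.1 p.2)} ⊂
              {p : V × V | ¬(o'.dir p.1 p.2 ↔ o.dir p.1 p.2)} := by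
            constructor
            · rintro ⟨a, b⟩ hab
              simp only [Set.mem_setOf_eq] at hab ⊢
              intro hiff
              apply hab
              by_cases hc : (a = u ∧ b = v) ∨ (a = v ∧ b = u)
              · rcases hc with ⟨ha, hb⟩ | ⟨ha, hb⟩
                · exact absurd (hiff.mpr (by rw [ha, hb]; exact houv))
                    (by rw [ha, hb]; exact ho'uv)
                · rw [ha, hb]
                  exact ⟨fun _ => ho₂vu, fun _ => ho'vu⟩
              · rw [hiff, hdir₂ a b]
                constructor
                · intro h; exact Or.inl ⟨h, hc⟩
                · rintro (⟨h, _⟩ | hvu)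
                  · exact h
                  · exact absurd (Or.inr hvu) hc
            · intro hsub'
              rcases hmem with heq | heq
              · have hm : (u, v) ∈ {p : V × V | ¬(o'.dir p.1 p.2 ↔ o.dir p.1 p.2)} := by
                  rw [heq]; exact hxy
                have h2 := hsub' hm
                simp only [Set.mem_setOf_eq] at h2
                exact h2 ⟨fun h => absurd h ho'uv, fun h => absurd h ho₂uv⟩
              · have hm : (v, u) ∈ {p : V × V | ¬(o'.dir p.1 p.2 ↔ o.dir p.1 p.2)} := by
                  rw [heq]; exact hxy
                have h2 := hsub' hm
                simp only [Set.mem_setOf_eq] at h2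
                exact h2 ⟨fun _ => ho₂vu, fun _ => ho'vu⟩
          have hlt : ({p : V × V | ¬(o'.dir p.1 p.2 ↔ o₂.dir p.1 p.2)}).ncard <
              ({p : V × V | ¬(o'.dir p.1 p.2 ↔ o.dir p.1 p.2)}).ncard :=
            Set.ncard_lt_ncard hsub (Set.toFinite _)
          exact hreach₂.trans (ih o₂ o' hac₂ hag₂ (by omega))
  exact main _ o o' hacyc hagree le_rfl
end

section
/- In a Coxeter group whose Coxeter graph is a finite tree, all Coxeter elements are conjugate to each other. -/
/-- The Coxeter graph of a Coxeter matrix: vertices are the generators, with an edge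
between `i` and `j` whenever the corresponding generators do not commute
(i.e. `M i j ≠ 2`). -/
def CoxeterMatrix.graph {B : Type*} (M : CoxeterMatrix B) : SimpleGraph B where
  Adj i j := i ≠ j ∧ M i j ≠ 2
  symm := ⟨fun i j h => ⟨h.1.symm, by rw [M.symmetric]; exact h.2⟩⟩
  loopless := ⟨fun i h => h.1 rfl⟩

lemma CoxeterMatrix.graph_adj {B : Type*} {M : CoxeterMatrix B} {i j : B} :
    M.graph.Adj i j ↔ i ≠ j ∧ M i j ≠ 2 := Iff.rfl

/-- A Coxeter word: a list of generators containing each generator exactly once. -/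
def IsCoxeterWord {B : Type*} (l : List B) : Prop :=
  l.Nodup ∧ ∀ i : B, i ∈ l

/-- One commutation move: swapping two adjacent commuting letters. -/
def CommSwap {B : Type*} (M : CoxeterMatrix B) (l l' : List B) : Prop :=
  ∃ (a b : B) (p q : List B), M a b = 2 ∧ l = p ++ a :: b :: q ∧ l' = p ++ b :: a :: q

/-- One rotation move: moving the first letter of a word to the end. -/
def RotMove {B : Type*} (l l' : List B) : Prop :=
  ∃ (a : B) (t : List B), l = a :: t ∧ l' = t ++ [a]

/-- Rotation equivalence: the equivalence relation on words generated by rotations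
and commutations of adjacent commuting letters. -/
def RotEquiv {B : Type*} (M : CoxeterMatrix B) : List B → List B → Prop :=
  Relation.EqvGen (fun l l' => CommSwap M l l' ∨ RotMove l l')

section Aux

variable {B : Type*} {M : CoxeterMatrix B}

lemma RotEquiv.rfl {l : List B} : RotEquiv M l l := Relation.EqvGen.refl l

lemma RotEquiv.symm' {l l' : List B} (h : RotEquiv M l l') : RotEquiv M l' l :=
  Relation.EqvGen.symm _ _ h

lemma RotEquiv.trans' {l l' l'' : List B} (h : RotEquiv M l l') (h' : RotEquiv M l' l'') :
    RotEquiv M l l'' := Relation.EqvGen.trans _ _ _ h h'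

lemma CommSwap.rotEquiv {l l' : List B} (h : CommSwap M l l') : RotEquiv M l l' :=
  Relation.EqvGen.rel _ _ (Or.inl h)

lemma RotMove.rotEquiv {l l' : List B} (h : RotMove l l') : RotEquiv M l l' :=
  Relation.EqvGen.rel _ _ (Or.inr h)

lemma rotEquiv_of_eq {l l' : List B} (h : l = l') : RotEquiv M l l' := h ▸ RotEquiv.rfl

lemma RotEquiv.perm {l l' : List B} (h : RotEquiv M l l') : l.Perm l' := by
  induction h with
  | rel x y hxy =>
      rcases hxy with ⟨a, b, p, q, _, rfl, rfl⟩ | ⟨a, t, rfl, rfl⟩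
      · exact List.Perm.append_left p (List.Perm.swap b a q)
      · exact (List.perm_append_singleton a t).symm
  | refl x => exact List.Perm.refl x
  | symm x y _ ih => exact ih.symm
  | trans x y z _ _ ih1 ih2 => exact ih1.trans ih2

lemma commSwap_mid {a b : B} (hab : M a b = 2) (p q : List B) :
    RotEquiv M (p ++ a :: b :: q) (p ++ b :: a :: q) :=
  CommSwap.rotEquiv ⟨a, b, p, q, hab, rfl, rfl⟩

lemma rotEquiv_slide (s : B) :
    ∀ (u p v : List B), (∀ b ∈ u, M s b = 2) →
      RotEquiv M (p ++ s :: (u ++ v)) ((p ++ u) ++ s :: v) := by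
  intro u
  induction u with
  | nil => intro p v _; exact rotEquiv_of_eq (by simp)
  | cons b u ih =>
      intro p v h
      have step : CommSwap M (p ++ s :: b :: (u ++ v)) (p ++ b :: s :: (u ++ v)) :=
        ⟨s, b, p, u ++ v, h b (List.mem_cons_self (a := b) (l := u)), rfl, rfl⟩
      refine (step.rotEquiv).trans' ?_
      have := ih (p ++ [b]) v (fun c hc => h c (List.mem_cons_of_mem b hc))
      refine (rotEquiv_of_eq ?_).trans' (this.trans' (rotEquiv_of_eq ?_)) <;> simp

section insAfter
variable [DecidableEq B]

/-- Insert `s` immediately after the first occurrence of `t`. -/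
def insAfter (s t : B) : List B → List B
  | [] => []
  | a :: r => if a = t then a :: s :: r else a :: insAfter s t r

variable {s t : B}

lemma insAfter_cons_self (u : List B) : insAfter s t (t :: u) = t :: s :: u := by
  simp [insAfter]

lemma insAfter_cons_ne {a : B} (h : a ≠ t) (u : List B) :
    insAfter s t (a :: u) = a :: insAfter s t u := by
  simp [insAfter, h]

lemma insAfter_append_left {u : List B} (h : t ∈ u) (v : List B) :
    insAfter s t (u ++ v) = insAfter s t u ++ v := by
  induction u with
  | nil => simp at h
  | cons a u ih =>
      by_cases hat : a = t
      · subst hat; simp [insAfter_cons_self]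
      · rw [List.cons_append, insAfter_cons_ne hat, insAfter_cons_ne hat,
          ih ((List.mem_cons.1 h).resolve_left (fun hh => hat hh.symm)), List.cons_append]

lemma insAfter_append_right {u : List B} (h : t ∉ u) (v : List B) :
    insAfter s t (u ++ v) = u ++ insAfter s t v := by
  induction u with
  | nil => simp
  | cons a u ih =>
      have hat : a ≠ t := fun hh => h (hh ▸ List.mem_cons_self (a := a) (l := u))
      rw [List.cons_append, insAfter_cons_ne hat, ih (fun hh => h (List.mem_cons_of_mem a hh)),
        List.cons_append]

variable (hM : ∀ b : B, b ≠ s → b ≠ t → M s b = 2)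

include hM in
lemma lift_commSwap {m m' : List B} (hs : s ∉ m) (hnd : m.Nodup)
    (h : CommSwap M m m') : RotEquiv M (insAfter s t m) (insAfter s t m') := by
  obtain ⟨a, b, p, q, hab, rfl, rfl⟩ := h
  by_cases htp : t ∈ p
  · rw [insAfter_append_left htp, insAfter_append_left htp]
    exact commSwap_mid hab _ _
  · have hsa : s ≠ a := fun hh => hs (hh ▸ (by simp : a ∈ p ++ a :: b :: q))
    have hsb : s ≠ b := fun hh => hs (hh ▸ (by simp : b ∈ p ++ a :: b :: q))
    have hnd' : (a :: b :: q).Nodup := hnd.of_append_right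
    have hab' : a ≠ b := by
      intro hh; exact (List.nodup_cons.1 hnd').1 (hh ▸ List.mem_cons_self (a := b) (l := q))
    rw [insAfter_append_right htp, insAfter_append_right htp]
    by_cases hat : a = t
    · subst hat
      have hbt : b ≠ a := fun hh => hab' hh.symm
      rw [insAfter_cons_self, insAfter_cons_ne hbt, insAfter_cons_self]
      have g1 : RotEquiv M (p ++ a :: s :: b :: q) (p ++ a :: b :: s :: q) := by
        simpa using commSwap_mid (hM b hsb.symm hbt) (p ++ [a]) q
      exact g1.trans' (commSwap_mid hab p (s :: q))
    · by_cases hbt : b = t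
      · subst hbt
        rw [insAfter_cons_ne hat, insAfter_cons_self, insAfter_cons_self]
        have has2 : M a s = 2 := by rw [M.symmetric]; exact hM a hsa.symm hat
        have g2 : RotEquiv M (p ++ b :: a :: s :: q) (p ++ b :: s :: a :: q) := by
          simpa using commSwap_mid has2 (p ++ [b]) q
        exact (commSwap_mid hab p (s :: q)).trans' g2
      · rw [insAfter_cons_ne hat, insAfter_cons_ne hbt, insAfter_cons_ne hbt,
          insAfter_cons_ne hat]
        exact commSwap_mid hab p _

lemma lift_rot {m m' : List B} (hs : s ∉ m) (hnd : m.Nodup) (ht : t ∈ m)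
    (h : RotMove m m') : RotEquiv M (insAfter s t m) (insAfter s t m') := by
  obtain ⟨a, r, rfl, rfl⟩ := h
  by_cases hat : a = t
  · subst hat
    have htr : a ∉ r := (List.nodup_cons.1 hnd).1
    rw [insAfter_cons_self, insAfter_append_right htr, insAfter_cons_self]
    have g1 : RotEquiv M (a :: s :: r) ((s :: r) ++ [a]) :=
      RotMove.rotEquiv ⟨a, s :: r, rfl, rfl⟩
    have g2 : RotEquiv M (s :: (r ++ [a])) ((r ++ [a]) ++ [s]) :=
      RotMove.rotEquiv ⟨s, r ++ [a], rfl, rfl⟩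
    exact g1.trans' (by simpa using g2)
  · have htr : t ∈ r := (List.mem_cons.1 ht).resolve_left (fun hh => hat hh.symm)
    rw [insAfter_cons_ne hat, insAfter_append_left htr]
    exact RotMove.rotEquiv ⟨a, insAfter s t r, rfl, rfl⟩

include hM in
lemma lift_rotEquiv {m m' : List B} (h : RotEquiv M m m') :
    s ∉ m → m.Nodup → t ∈ m → RotEquiv M (insAfter s t m) (insAfter s t m') := by
  induction h with
  | rel x y hxy =>
      intro h1 h2 h3
      rcases hxy with hc | hr
      · exact lift_commSwap hM h1 h2 hc
      · exact lift_rot h1 h2 h3 hr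
  | refl x => intros; exact RotEquiv.rfl
  | symm x y hxy ih =>
      intro h1 h2 h3
      have hp : x.Perm y := RotEquiv.perm (M := M) hxy
      exact (ih (fun hh => h1 (hp.mem_iff.1 hh)) (hp.nodup_iff.2 h2)
        (hp.mem_iff.2 h3)).symm'
  | trans x y z hxy hyz ih1 ih2 =>
      intro h1 h2 h3
      have hp : x.Perm y := RotEquiv.perm (M := M) hxy
      exact (ih1 h1 h2 h3).trans'
        (ih2 (fun hh => h1 (hp.mem_iff.2 hh)) (hp.nodup_iff.1 h2) (hp.mem_iff.1 h3))

include hM in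
lemma toNormal (hst : s ≠ t)
    {l : List B} (hl : IsCoxeterWord l) :
    ∃ m : List B, s ∉ m ∧ m.Nodup ∧ (∀ b : B, b ≠ s → b ∈ m) ∧ t ∈ m ∧
      RotEquiv M l (insAfter s t m) := by
  obtain ⟨hnd, hmem⟩ := hl
  obtain ⟨p, q, rfl⟩ := List.append_of_mem (hmem t)
  have hs : s ∈ p ∨ s ∈ q := by
    rcases List.mem_append.1 (hmem s) with h | h
    · exact Or.inl h
    · rcases List.mem_cons.1 h with h | h
      · exact absurd h hst
      · exact Or.inr h
  rcases hs with hsp | hsq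
  · -- s occurs before t
    obtain ⟨p1, p2, rfl⟩ := List.append_of_mem hsp
    have hnd' : (p1 ++ s :: (p2 ++ t :: q)).Nodup := by simpa using hnd
    simp only [List.nodup_append, List.nodup_cons, List.mem_append, List.mem_cons,
      List.disjoint_left, not_or] at hnd'
    obtain ⟨hp1nd, ⟨⟨hsp2, hst', hsq⟩, hp2nd, ⟨htq, hqnd⟩, hp2q⟩, hp1x⟩ := hnd'
    refine ⟨p1 ++ (p2 ++ t :: q), ?_, ?_, ?_, by simp, ?_⟩
    · simp only [List.mem_append, List.mem_cons, not_or]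
      exact ⟨fun h => hp1x s h s (Or.inl rfl) rfl, hsp2, hst, hsq⟩
    · have hsub : (p1 ++ (p2 ++ t :: q)).Sublist (p1 ++ s :: (p2 ++ t :: q)) :=
        (List.sublist_cons_self s _).append_left p1
      exact List.Nodup.sublist hsub (by simpa using hnd)
    · intro b hb
      have := hmem b
      simp only [List.mem_append, List.mem_cons] at this ⊢
      rcases this with (h | h | h) | h
      · exact Or.inl h
      · exact absurd h hb
      · exact Or.inr (Or.inl h)
      · exact Or.inr (Or.inr h)
    · -- the rotation-equivalence
      have hcomm1 : ∀ b ∈ p1, M s b = 2 := fun b hb =>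
        hM b (fun h => hp1x b hb s (Or.inl rfl) h) (fun h => hp1x b hb t (Or.inr (Or.inr (Or.inl rfl))) h)
      have hcomm2 : ∀ b ∈ q, M s b = 2 := fun b hb =>
        hM b (fun h => hsq (h ▸ hb)) (fun h => htq (h ▸ hb))
      have slide1 := rotEquiv_slide s p1 [] (p2 ++ t :: q) hcomm1
      have slide2 := rotEquiv_slide s q (p1 ++ p2 ++ [t]) [] hcomm2
      have rot : RotMove (s :: (p1 ++ (p2 ++ t :: q))) ((p1 ++ (p2 ++ t :: q)) ++ [s]) :=
        ⟨s, _, rfl, rfl⟩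
      have e2 : insAfter s t (p1 ++ (p2 ++ t :: q)) = p1 ++ p2 ++ t :: s :: q := by
        rw [insAfter_append_right (fun h => hp1x t h t (Or.inr (Or.inr (Or.inl rfl))) rfl) (p2 ++ t :: q),
          insAfter_append_right (fun h => hp2q t h t (Or.inl rfl) rfl) (t :: q), insAfter_cons_self]
        simp
      have c1 : RotEquiv M (s :: (p1 ++ (p2 ++ t :: q))) ((p1 ++ s :: p2) ++ t :: q) := by
        simpa using slide1
      have c3 : RotEquiv M ((p1 ++ (p2 ++ t :: q)) ++ [s])
          (insAfter s t (p1 ++ (p2 ++ t :: q))) := by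
        rw [e2]; simpa using slide2.symm'
      exact c1.symm'.trans' (rot.rotEquiv.trans' c3)
  · -- s occurs after t
    obtain ⟨q1, q2, rfl⟩ := List.append_of_mem hsq
    have hnd' := hnd
    simp only [List.nodup_append, List.nodup_cons, List.mem_append, List.mem_cons,
      List.disjoint_left, not_or] at hnd'
    obtain ⟨hpnd, ⟨⟨htq1, hts, htq2⟩, hq1nd, ⟨hsq2, hq2nd⟩, hq1x⟩, hpx⟩ := hnd'
    refine ⟨p ++ t :: (q1 ++ q2), ?_, ?_, ?_, by simp, ?_⟩
    · simp only [List.mem_append, List.mem_cons, not_or]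
      exact ⟨fun h => hpx s h s (Or.inr (Or.inr (Or.inl rfl))) rfl, hst, fun h => hq1x s h s (Or.inl rfl) rfl, hsq2⟩
    · have hsub : (p ++ t :: (q1 ++ q2)).Sublist (p ++ t :: (q1 ++ s :: q2)) :=
        ((List.sublist_cons_self s q2).append_left q1).cons₂ t |>.append_left p
      exact List.Nodup.sublist hsub hnd
    · intro b hb
      have := hmem b
      simp only [List.mem_append, List.mem_cons] at this ⊢
      rcases this with h | h | h | h | h
      · exact Or.inl h
      · exact Or.inr (Or.inl h)
      · exact Or.inr (Or.inr (Or.inl h))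
      · exact absurd h hb
      · exact Or.inr (Or.inr (Or.inr h))
    · have hcomm : ∀ b ∈ q1, M s b = 2 := fun b hb =>
        hM b (fun h => hq1x b hb s (Or.inl rfl) h) (fun h => htq1 (h ▸ hb))
      have slide := rotEquiv_slide s q1 (p ++ [t]) q2 hcomm
      have c1 : RotEquiv M (p ++ t :: (q1 ++ s :: q2)) ((p ++ [t]) ++ s :: (q1 ++ q2)) := by
        simpa using slide.symm'
      have e : insAfter s t (p ++ t :: (q1 ++ q2)) = (p ++ [t]) ++ s :: (q1 ++ q2) := by
        rw [insAfter_append_right (fun h => hpx t h t (Or.inl rfl) rfl) (t :: (q1 ++ q2)), insAfter_cons_self]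
        simp
      exact c1.trans' (rotEquiv_of_eq e.symm)

end insAfter

/-- Restriction of a Coxeter matrix to a subtype. -/
def CoxeterMatrix.restrict (M : CoxeterMatrix B) (P : B → Prop) :
    CoxeterMatrix {b : B // P b} where
  M := fun i j => M i.1 j.1
  isSymm := by ext i j; exact M.symmetric j.1 i.1
  diagonal := fun i => M.diagonal i.1
  off_diagonal := fun i j h => M.off_diagonal i.1 j.1 (fun hh => h (Subtype.ext hh))

lemma restrict_graph_adj (M : CoxeterMatrix B) (P : B → Prop) (i j : {b : B // P b}) :
    (M.restrict P).graph.Adj i j ↔ M.graph.Adj i.1 j.1 := by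
  constructor
  · intro h; obtain ⟨h1, h2⟩ := CoxeterMatrix.graph_adj.1 h
    exact CoxeterMatrix.graph_adj.2 ⟨fun hh => h1 (Subtype.ext hh), h2⟩
  · intro h; obtain ⟨h1, h2⟩ := CoxeterMatrix.graph_adj.1 h
    exact CoxeterMatrix.graph_adj.2 ⟨fun hh => h1 (congrArg Subtype.val hh), h2⟩

lemma rotEquiv_map {P : B → Prop} {x y : List {b : B // P b}}
    (h : RotEquiv (M.restrict P) x y) :
    RotEquiv M (x.map Subtype.val) (y.map Subtype.val) := by
  induction h with
  | rel a b hab =>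
      rcases hab with ⟨u, w, p, q, h2, rfl, rfl⟩ | ⟨u, r, rfl, rfl⟩
      · refine CommSwap.rotEquiv
          ⟨u.1, w.1, p.map Subtype.val, q.map Subtype.val, h2, ?_, ?_⟩ <;> simp
      · refine RotMove.rotEquiv ⟨u.1, r.map Subtype.val, ?_, ?_⟩ <;> simp
  | refl x => exact RotEquiv.rfl
  | symm x y _ ih => exact ih.symm'
  | trans x y z _ _ ih1 ih2 => exact ih1.trans' ih2

/-- Existence of a leaf in a finite tree with at least 2 vertices. -/
lemma exists_leaf [Fintype B] [DecidableEq B] (G : SimpleGraph B) [DecidableRel G.Adj]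
    (hG : G.IsTree) (h2 : 1 < Fintype.card B) :
    ∃ (v t : B), G.Adj v t ∧ ∀ b, G.Adj v b → b = t := by
  have hedge : G.edgeFinset.card + 1 = Fintype.card B := hG.card_edgeFinset
  have hsum : ∑ v, G.degree v = 2 * G.edgeFinset.card := G.sum_degrees_eq_twice_card_edges
  have hlow : ∃ v : B, G.degree v ≤ 1 := by
    by_contra hc
    push_neg at hc
    have : 2 * Fintype.card B ≤ ∑ v, G.degree v := by
      calc 2 * Fintype.card B = ∑ _v : B, 2 := by simp [mul_comm]
        _ ≤ ∑ v, G.degree v := Finset.sum_le_sum (fun v _ => hc v)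
    omega
  obtain ⟨v, hv⟩ := hlow
  obtain ⟨w, hw⟩ := Fintype.exists_ne_of_one_lt_card h2 v
  obtain ⟨walk⟩ := hG.isConnected.preconnected v w
  obtain ⟨t, ht⟩ : ∃ t, G.Adj v t := by
    cases walk with
    | nil => exact absurd rfl hw
    | cons h p => exact ⟨_, h⟩
  refine ⟨v, t, ht, fun b hb => ?_⟩
  by_contra hbt
  have : ({t, b} : Finset B) ⊆ G.neighborFinset v := by
    intro x hx
    rcases Finset.mem_insert.1 hx with rfl | hx
    · exact (SimpleGraph.mem_neighborFinset ..).2 ht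
    · rw [Finset.mem_singleton] at hx
      exact hx ▸ (SimpleGraph.mem_neighborFinset ..).2 hb
  have hcard : ({t, b} : Finset B).card = 2 := Finset.card_pair (fun h => hbt h.symm)
  have := Finset.card_le_card this
  rw [hcard, SimpleGraph.card_neighborFinset_eq_degree] at this
  omega

lemma restrict_reachable (M : CoxeterMatrix B) {v t : B}
    (huniq : ∀ b, M.graph.Adj v b → b = t) (htv : t ≠ v) :
    ∀ (n : ℕ) {a b : B} (w : M.graph.Walk a b), w.length ≤ n → ∀ (ha : a ≠ v) (hb : b ≠ v),
      (M.restrict (fun x => x ≠ v)).graph.Reachable ⟨a, ha⟩ ⟨b, hb⟩ := by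
  intro n
  induction n with
  | zero =>
      intro a b w hw ha hb
      cases w with
      | nil => exact SimpleGraph.Reachable.refl _
      | cons h p => simp [SimpleGraph.Walk.length_cons] at hw
  | succ n ih =>
      intro a b w hw ha hb
      cases w with
      | nil => exact SimpleGraph.Reachable.refl _
      | @cons _ c _ h p =>
          by_cases hc : c = v
          · subst hc
            cases p with
            | nil => exact absurd rfl hb
            | @cons _ d _ h2 p2 =>
                have hd : d = t := huniq d h2
                have hat : a = t := huniq a h.symm
                have hda : d = a := by rw [hd, hat]
                subst hda
                refine ih p2 ?_ ha hb
                simp [SimpleGraph.Walk.length_cons] at hw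
                omega
          · have hadj : (M.restrict (fun x => x ≠ v)).graph.Adj ⟨a, ha⟩ ⟨c, hc⟩ :=
              (restrict_graph_adj M _ _ _).2 h
            refine hadj.reachable.trans (ih p ?_ hc hb)
            simp [SimpleGraph.Walk.length_cons] at hw
            omega

lemma restrict_isTree (M : CoxeterMatrix B) (htree : M.graph.IsTree) {v t : B}
    (hadj : M.graph.Adj v t) (huniq : ∀ b, M.graph.Adj v b → b = t) :
    (M.restrict (fun x => x ≠ v)).graph.IsTree := by
  have htv : t ≠ v := fun h => (M.graph.loopless.irrefl v) (h ▸ hadj)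
  have : Nonempty { b // b ≠ v } := ⟨⟨t, htv⟩⟩
  constructor
  · refine SimpleGraph.Connected.mk ?_
    rintro ⟨a, ha⟩ ⟨b, hb⟩
    obtain ⟨w⟩ := htree.isConnected.preconnected a b
    exact restrict_reachable M huniq htv w.length w le_rfl ha hb
  · intro x c hc
    exact htree.IsAcyclic
      (c.map ⟨Subtype.val, fun {i j} h => (restrict_graph_adj M _ i j).1 h⟩)
      (hc.map (fun i j hij => Subtype.ext hij))

lemma coxeterWord_unique [Fintype B] (hcard : Fintype.card B ≤ 1) {l l' : List B}
    (hl : IsCoxeterWord l) (hl' : IsCoxeterWord l') : l = l' := by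
  have hsub : Subsingleton B := Fintype.card_le_one_iff_subsingleton.1 hcard
  cases l with
  | nil =>
      cases l' with
      | nil => rfl
      | cons a r => exact absurd (hl.2 a) List.not_mem_nil
  | cons a r =>
      cases r with
      | cons b r2 =>
          exact absurd (by rw [Subsingleton.elim a b]; exact List.mem_cons_self (a := b) (l := r2))
            (List.nodup_cons.1 hl.1).1
      | nil =>
          cases l' with
          | nil => exact absurd (hl'.2 a) List.not_mem_nil
          | cons a' r' =>
              cases r' with
              | cons b' r2 =>
                  exact absurd (by rw [Subsingleton.elim a' b']; exact List.mem_cons_self (a := b') (l := r2))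
                    (List.nodup_cons.1 hl'.1).1
              | nil => rw [Subsingleton.elim a a']

end Aux

lemma tree_rotEquiv (n : ℕ) :
    ∀ {B : Type*} [Fintype B] [DecidableEq B] (M : CoxeterMatrix B), Fintype.card B ≤ n →
      M.graph.IsTree → ∀ {l l' : List B}, IsCoxeterWord l → IsCoxeterWord l' →
      RotEquiv M l l' := by
  induction n with
  | zero =>
      intro B _ _ M hcard _ l l' hl hl'
      rw [coxeterWord_unique (by omega) hl hl']
      exact RotEquiv.rfl
  | succ n ih =>
      intro B _ _ M hcard htree l l' hl hl'
      classical
      by_cases hsmall : Fintype.card B ≤ 1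
      · rw [coxeterWord_unique hsmall hl hl']
        exact RotEquiv.rfl
      · push_neg at hsmall
        obtain ⟨v, t, hadj, huniq⟩ := exists_leaf M.graph htree hsmall
        have hvt : v ≠ t := hadj.ne
        have hM : ∀ b : B, b ≠ v → b ≠ t → M v b = 2 := by
          intro b hbv hbt
          by_contra h2
          exact hbt (huniq b (CoxeterMatrix.graph_adj.2 ⟨fun hh => hbv hh.symm, h2⟩))
        obtain ⟨m, hsm, hmnd, hmmem, htm, hlm⟩ := toNormal hM hvt hl
        obtain ⟨m', hsm', hmnd', hmmem', htm', hlm'⟩ := toNormal hM hvt hl'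
        have hmP : ∀ b ∈ m, b ≠ v := fun b hb hh => hsm (hh ▸ hb)
        have hmP' : ∀ b ∈ m', b ≠ v := fun b hb hh => hsm' (hh ▸ hb)
        set P := fun b : B => b ≠ v with hP
        let mh : List {b : B // P b} := m.pmap (fun b hb => ⟨b, hb⟩) hmP
        let mh' : List {b : B // P b} := m'.pmap (fun b hb => ⟨b, hb⟩) hmP'
        have hmap : mh.map Subtype.val = m := by
          simp [mh, List.map_pmap]
        have hmap' : mh'.map Subtype.val = m' := by
          simp [mh', List.map_pmap]
        have hword : IsCoxeterWord mh := by
          constructor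
          · exact List.Nodup.pmap (fun a ha b hb he => congrArg Subtype.val he) hmnd
          · intro i
            exact List.mem_pmap.2 ⟨i.1, hmmem i.1 i.2, rfl⟩
        have hword' : IsCoxeterWord mh' := by
          constructor
          · exact List.Nodup.pmap (fun a ha b hb he => congrArg Subtype.val he) hmnd'
          · intro i
            exact List.mem_pmap.2 ⟨i.1, hmmem' i.1 i.2, rfl⟩
        have hcard' : Fintype.card {b : B // P b} ≤ n := by
          have := Fintype.card_subtype_lt (p := P) (x := v) (by simp [hP])
          omega
        have hrec := ih (M.restrict P) hcard' (restrict_isTree M htree hadj huniq) hword hword'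
        have h2 : RotEquiv M m m' := by
          have := rotEquiv_map (M := M) hrec
          rwa [hmap, hmap'] at this
        exact hlm.trans' ((lift_rotEquiv hM h2 hsm hmnd htm).trans' hlm'.symm')

lemma simple_comm {B W : Type*} [Group W] {M : CoxeterMatrix B} (cs : CoxeterSystem M W)
    {a b : B} (h : M a b = 2) : cs.simple a * cs.simple b = cs.simple b * cs.simple a := by
  have := cs.simple_mul_simple_pow a b
  rw [h, pow_two] at this
  calc cs.simple a * cs.simple b = (cs.simple a * cs.simple b)⁻¹ := by
        rw [inv_eq_of_mul_eq_one_right this]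
    _ = cs.simple b * cs.simple a := by
        rw [mul_inv_rev, cs.inv_simple, cs.inv_simple]

lemma isConj_of_rotEquiv {B W : Type*} [Group W] {M : CoxeterMatrix B}
    (cs : CoxeterSystem M W) {l l' : List B} (h : RotEquiv M l l') :
    IsConj (cs.wordProd l) (cs.wordProd l') := by
  induction h with
  | rel x y hxy =>
      rcases hxy with ⟨a, b, p, q, hab, rfl, rfl⟩ | ⟨a, t, rfl, rfl⟩
      · have : cs.wordProd (p ++ a :: b :: q) = cs.wordProd (p ++ b :: a :: q) := by
          rw [cs.wordProd_append, cs.wordProd_append, cs.wordProd_cons, cs.wordProd_cons,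
            cs.wordProd_cons, cs.wordProd_cons, ← mul_assoc (cs.simple a),
            simple_comm cs hab, mul_assoc]
        rw [this]
      · rw [isConj_iff]
        refine ⟨(cs.simple a)⁻¹, ?_⟩
        rw [cs.wordProd_cons, cs.wordProd_append, cs.wordProd_cons, cs.wordProd_nil]
        group
  | refl x => exact IsConj.refl _
  | symm x y _ ih => exact ih.symm
  | trans x y z _ _ ih1 ih2 => exact ih1.trans ih2

/-- In a Coxeter group whose Coxeter graph is a finite tree, all Coxeter elements
are conjugate to each other. -/
theorem coxeterElements_conj_of_tree {B W : Type*} [Finite B] [Group W]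
    {M : CoxeterMatrix B} (cs : CoxeterSystem M W) (htree : M.graph.IsTree)
    (l l' : List B) (hl : IsCoxeterWord l) (hl' : IsCoxeterWord l') :
    IsConj (cs.wordProd l) (cs.wordProd l') := by
  classical
  cases nonempty_fintype B
  exact isConj_of_rotEquiv cs
    (tree_rotEquiv (Fintype.card B) M le_rfl htree hl hl')
end

section
/- Under the bijection between Coxeter elements and acyclic orientations of the Coxeter graph, rotation of a Coxeter word (moving the first letter to the end) corresponds exactly to firing the corresponding sink; hence two Coxeter elements are rotation equivalent if and only if their acyclic orientations lie in the same reachability class under sink firing. -/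
namespace EdgeOrientation

/-- A source is a vertex with no incoming edges. -/
def IsSource {V : Type*} {G : SimpleGraph V} (o : EdgeOrientation G) (s : V) : Prop :=
  ∀ t, ¬ o.dir t s

/-- One source-firing move on acyclic orientations: reverse all edges at a source. -/
def SourceFireStep {V : Type*} {G : SimpleGraph V} (o o' : EdgeOrientation G) : Prop :=
  o.Acyclic ∧ ∃ s, o.IsSource s ∧ o'.dir = fireDir s o.dir

/-- Reachability by finite sequences of source-firing moves. -/
def SourceReach {V : Type*} {G : SimpleGraph V} (o o' : EdgeOrientation G) : Prop :=
  Relation.ReflTransGen SourceFireStep o o'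

end EdgeOrientation

/-- The orientation of the Coxeter graph induced by a word containing all generators:
each edge points from the earlier-occurring letter to the later-occurring one (so the
first letter of the word is a source). -/
def wordOrient {B : Type*} [DecidableEq B] (M : CoxeterMatrix B) (l : List B)
    (hl : ∀ i : B, i ∈ l) : EdgeOrientation M.graph where
  dir u v := M.graph.Adj u v ∧ l.idxOf u < l.idxOf v
  dir_adj := fun u v h => h.1
  dir_total := fun u v hadj => by
    constructor
    · rintro ⟨-, h⟩ ⟨-, h'⟩
      exact absurd h' (Nat.lt_asymm h)
    · intro h
      refine ⟨hadj, ?_⟩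
      rcases Nat.lt_trichotomy (l.idxOf u) (l.idxOf v) with hlt | heq | hgt
      · exact hlt
      · exact absurd ((List.idxOf_inj (hl u)).mp heq) hadj.ne
      · exact absurd ⟨hadj.symm, hgt⟩ h

section Aux1
open List
theorem EdgeOrientation.ext'_s15 {V : Type*} {G : SimpleGraph V} {o o' : EdgeOrientation G}
    (h : o.dir = o'.dir) : o = o' := by
  cases o; cases o'; cases h; rfl

section IdxLemmas
variable {B : Type*} [DecidableEq B]

/-- idxOf values in a list of the form `p ++ a :: b :: q` vs the swapped list. -/
lemma idx_swap_cases (p q : List B) (a b : B) (hnd : (p ++ a :: b :: q).Nodup)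
    {z : B} (hz : z ∈ p ++ a :: b :: q) :
    (z ≠ a ∧ z ≠ b ∧ idxOf z (p ++ a :: b :: q) = idxOf z (p ++ b :: a :: q) ∧
      idxOf z (p ++ a :: b :: q) ≠ p.length ∧
      idxOf z (p ++ a :: b :: q) ≠ p.length + 1) ∨
    (z = a ∧ idxOf z (p ++ a :: b :: q) = p.length ∧
      idxOf z (p ++ b :: a :: q) = p.length + 1) ∨
    (z = b ∧ idxOf z (p ++ a :: b :: q) = p.length + 1 ∧
      idxOf z (p ++ b :: a :: q) = p.length) := by
  rw [List.nodup_append] at hnd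
  obtain ⟨hp, hq, hdisj⟩ := hnd
  have hab : a ≠ b := by
    have := List.nodup_cons.mp hq
    intro h; exact this.1 (h ▸ List.mem_cons_self)
  rcases List.mem_append.mp hz with hzp | hzc
  · left
    have hza : z ≠ a := fun h => hdisj z hzp a List.mem_cons_self h
    have hzb : z ≠ b := fun h => hdisj z hzp b (List.mem_cons.mpr (Or.inr (List.mem_cons_self))) h
    have h1 : idxOf z (p ++ a :: b :: q) = idxOf z p := idxOf_append_of_mem hzp
    have h2 : idxOf z (p ++ b :: a :: q) = idxOf z p := idxOf_append_of_mem hzp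
    have h3 : idxOf z p < p.length := idxOf_lt_length_iff.mpr hzp
    exact ⟨hza, hzb, by omega, by omega, by omega⟩
  · have hznp : z ∉ p := fun h => hdisj z h z hzc rfl
    have e1 : idxOf z (p ++ a :: b :: q) = p.length + idxOf z (a :: b :: q) :=
      idxOf_append_of_notMem hznp
    have e2 : idxOf z (p ++ b :: a :: q) = p.length + idxOf z (b :: a :: q) :=
      idxOf_append_of_notMem hznp
    by_cases hza : z = a
    · subst hza
      right; left
      refine ⟨rfl, ?_, ?_⟩
      · rw [e1, idxOf_cons_self]; omega
      · rw [e2, idxOf_cons_ne _ (Ne.symm hab), idxOf_cons_self]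
    · by_cases hzb : z = b
      · subst hzb
        right; right
        refine ⟨rfl, ?_, ?_⟩
        · rw [e1, idxOf_cons_ne _ hab, idxOf_cons_self]
        · rw [e2, idxOf_cons_self]; omega
      · left
        have e1' : idxOf z (a :: b :: q) = idxOf z q + 2 := by
          rw [idxOf_cons_ne _ (Ne.symm hza), idxOf_cons_ne _ (Ne.symm hzb)]
        have e2' : idxOf z (b :: a :: q) = idxOf z q + 2 := by
          rw [idxOf_cons_ne _ (Ne.symm hzb), idxOf_cons_ne _ (Ne.symm hza)]
        exact ⟨hza, hzb, by omega, by omega, by omega⟩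

/-- erasing an element preserves relative order of the other elements. -/
lemma erase_lt_iff : ∀ (l : List B), l.Nodup → ∀ {a u v : B}, u ∈ l → v ∈ l →
    u ≠ a → v ≠ a →
    (idxOf u (l.erase a) < idxOf v (l.erase a) ↔ idxOf u l < idxOf v l)
  | [], _, _, _, _, hu, _, _, _ => absurd hu (List.not_mem_nil)
  | c :: r, hnd, a, u, v, hu, hv, hua, hva => by
    have hndr : r.Nodup := (List.nodup_cons.mp hnd).2
    have hcr : c ∉ r := (List.nodup_cons.mp hnd).1
    by_cases hca : c = a
    · subst hca
      rw [List.erase_cons_head]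
      have hur : u ∈ r := by rcases List.mem_cons.mp hu with h | h; exact absurd h hua; exact h
      have hvr : v ∈ r := by rcases List.mem_cons.mp hv with h | h; exact absurd h hva; exact h
      have h1 : idxOf u (c :: r) = idxOf u r + 1 := idxOf_cons_ne _ (fun h => hua h.symm)
      have h2 : idxOf v (c :: r) = idxOf v r + 1 := idxOf_cons_ne _ (fun h => hva h.symm)
      omega
    · rw [List.erase_cons_tail (by simp [hca])]
      by_cases huc : u = c
      · subst huc
        rw [idxOf_cons_self, idxOf_cons_self]
        by_cases hvc : v = u
        · subst hvc; simp
        · have hvr : v ∈ r := by rcases List.mem_cons.mp hv with h | h; exact absurd h hvc; exact h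
          have hvre : v ∈ r.erase a := (List.mem_erase_of_ne hva).mpr hvr
          rw [idxOf_cons_ne _ (Ne.symm hvc), idxOf_cons_ne _ (Ne.symm hvc)]
          simp
      · by_cases hvc : v = c
        · subst hvc
          rw [idxOf_cons_self, idxOf_cons_self,
            idxOf_cons_ne _ (Ne.symm huc), idxOf_cons_ne _ (Ne.symm huc)]
          simp
        · have hur : u ∈ r := by rcases List.mem_cons.mp hu with h | h; exact absurd h huc; exact h
          have hvr : v ∈ r := by rcases List.mem_cons.mp hv with h | h; exact absurd h hvc; exact h
          rw [idxOf_cons_ne _ (Ne.symm huc), idxOf_cons_ne _ (Ne.symm hvc),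
            idxOf_cons_ne _ (Ne.symm huc), idxOf_cons_ne _ (Ne.symm hvc)]
          have := erase_lt_iff r hndr hur hvr hua hva
          omega

end IdxLemmas

end Aux1

section AuxMain

open EdgeOrientation List

variable {B : Type*} [DecidableEq B] {M : CoxeterMatrix B}

lemma wordOrient_dir_iff (l : List B) (hl : ∀ i : B, i ∈ l) (u v : B) :
    (wordOrient M l hl).dir u v ↔ M.graph.Adj u v ∧ l.idxOf u < l.idxOf v := Iff.rfl

lemma wordOrient_acyclic (l : List B) (hl : ∀ i : B, i ∈ l) :
    (wordOrient M l hl).Acyclic := by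
  intro v hv
  have key : ∀ a b : B, Relation.TransGen (wordOrient M l hl).dir a b →
      l.idxOf a < l.idxOf b := by
    intro a b h
    induction h with
    | single h => exact h.2
    | tail _ h ih => exact ih.trans h.2
  exact absurd (key v v hv) (lt_irrefl _)

lemma idxOf_cons_shift {t : List B} {i x : B} (hx : x ≠ i) :
    idxOf x (i :: t) = idxOf x t + 1 :=
  idxOf_cons_ne _ (Ne.symm hx)

lemma rot_dir (i : B) (t : List B) (hnd : (i :: t).Nodup)
    (h : ∀ j : B, j ∈ i :: t) (h' : ∀ j : B, j ∈ t ++ [i]) :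
    (wordOrient M (t ++ [i]) h').dir = fireDir i (wordOrient M (i :: t) h).dir := by
  have hit : i ∉ t := (List.nodup_cons.mp hnd).1
  have idx_i : idxOf i (t ++ [i]) = t.length := by
    rw [idxOf_append_of_notMem hit, idxOf_cons_self]; omega
  have mem_t : ∀ x : B, x ≠ i → x ∈ t := by
    intro x hx
    rcases List.mem_cons.mp (h x) with h0 | h0
    · exact absurd h0 hx
    · exact h0
  have idx_ne : ∀ x : B, x ≠ i → idxOf x (t ++ [i]) = idxOf x t ∧ idxOf x t < t.length := by
    intro x hx
    exact ⟨idxOf_append_of_mem (mem_t x hx), idxOf_lt_length_iff.mpr (mem_t x hx)⟩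
  funext u v
  apply propext
  show (M.graph.Adj u v ∧ idxOf u (t ++ [i]) < idxOf v (t ++ [i])) ↔
    ((u = i ∨ v = i) ∧ (M.graph.Adj v u ∧ idxOf v (i :: t) < idxOf u (i :: t))) ∨
    (¬ (u = i ∨ v = i) ∧ (M.graph.Adj u v ∧ idxOf u (i :: t) < idxOf v (i :: t)))
  by_cases hu : u = i
  · subst hu
    by_cases hv : v = u
    · subst hv
      constructor
      · rintro ⟨hadj, -⟩; exact absurd rfl hadj.ne
      · rintro (⟨-, hadj, -⟩ | ⟨-, hadj, -⟩) <;> exact absurd rfl hadj.ne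
    · obtain ⟨e, hlt⟩ := idx_ne v hv
      constructor
      · rintro ⟨hadj, hord⟩
        rw [idx_i, e] at hord; omega
      · rintro (⟨-, -, hord⟩ | ⟨hc, -⟩)
        · rw [idxOf_cons_self] at hord; omega
        · exact absurd (Or.inl rfl) hc
  · by_cases hv : v = i
    · subst hv
      obtain ⟨e, hlt⟩ := idx_ne u hu
      constructor
      · rintro ⟨hadj, -⟩
        refine Or.inl ⟨Or.inr rfl, hadj.symm, ?_⟩
        rw [idxOf_cons_self, idxOf_cons_shift hu]; omega
      · rintro (⟨-, hadj, -⟩ | ⟨hc, -⟩)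
        · refine ⟨hadj.symm, ?_⟩
          rw [idx_i, e]; omega
        · exact absurd (Or.inr rfl) hc
    · obtain ⟨eu, hu'⟩ := idx_ne u hu
      obtain ⟨ev, hv'⟩ := idx_ne v hv
      constructor
      · rintro ⟨hadj, hord⟩
        refine Or.inr ⟨by tauto, hadj, ?_⟩
        rw [idxOf_cons_shift hu, idxOf_cons_shift hv]
        rw [eu, ev] at hord; omega
      · rintro (⟨hc, -⟩ | ⟨-, hadj, hord⟩)
        · tauto
        · refine ⟨hadj, ?_⟩
          rw [idxOf_cons_shift hu, idxOf_cons_shift hv] at hord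
          rw [eu, ev]; omega

lemma rot_fire (i : B) (t : List B) (hnd : (i :: t).Nodup)
    (h : ∀ j : B, j ∈ i :: t) (h' : ∀ j : B, j ∈ t ++ [i]) :
    SourceFireStep (wordOrient M (i :: t) h) (wordOrient M (t ++ [i]) h') := by
  refine ⟨wordOrient_acyclic _ _, i, ?_, rot_dir i t hnd h h'⟩
  rintro u ⟨-, hlt⟩
  rw [idxOf_cons_self] at hlt
  omega

end AuxMain

section AuxComm
set_option linter.unusedSectionVars false

open EdgeOrientation List

variable {B : Type*} [DecidableEq B] {M : CoxeterMatrix B}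

lemma commSwap_perm {l l' : List B} (h : CommSwap M l l') : l.Perm l' := by
  obtain ⟨a, b, p, q, -, rfl, rfl⟩ := h
  exact List.Perm.append_left p (List.Perm.swap b a q)

lemma commSwap_lt_iff {l l' : List B} (h : CommSwap M l l') (hnd : l.Nodup)
    {u v : B} (hu : u ∈ l) (hv : v ∈ l) (hadj : M.graph.Adj u v) :
    (l.idxOf u < l.idxOf v ↔ l'.idxOf u < l'.idxOf v) := by
  obtain ⟨a, b, p, q, hab, rfl, rfl⟩ := h
  have Hu := idx_swap_cases p q a b hnd hu
  have Hv := idx_swap_cases p q a b hnd hv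
  obtain ⟨hne, hM2⟩ := hadj
  rcases Hu with ⟨-, -, e1, e2, e3⟩ | ⟨hue, e1, e2⟩ | ⟨hue, e1, e2⟩ <;>
    rcases Hv with ⟨-, -, f1, f2, f3⟩ | ⟨hve, f1, f2⟩ | ⟨hve, f1, f2⟩
  all_goals try omega
  · exact absurd hab (by rw [hue, hve] at hM2; exact hM2)
  · exact absurd ((M.symmetric b a).trans hab) (by rw [hue, hve] at hM2; exact hM2)

lemma commSwap_symm {l l' : List B} (h : CommSwap M l l') : CommSwap M l' l := by
  obtain ⟨a, b, p, q, hab, rfl, rfl⟩ := h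
  exact ⟨b, a, p, q, (M.symmetric a b) ▸ hab, rfl, rfl⟩

lemma commSwap_wordOrient {l l' : List B} (h : CommSwap M l l') (hnd : l.Nodup)
    (hl : ∀ i : B, i ∈ l) (hl' : ∀ i : B, i ∈ l') :
    wordOrient M l hl = wordOrient M l' hl' := by
  apply EdgeOrientation.ext'_s15
  funext u v
  apply propext
  show M.graph.Adj u v ∧ l.idxOf u < l.idxOf v ↔
    M.graph.Adj u v ∧ l'.idxOf u < l'.idxOf v
  constructor
  · rintro ⟨hadj, hord⟩
    exact ⟨hadj, (commSwap_lt_iff h hnd (hl u) (hl v) hadj).mp hord⟩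
  · rintro ⟨hadj, hord⟩
    exact ⟨hadj, (commSwap_lt_iff h hnd (hl u) (hl v) hadj).mpr hord⟩

lemma commSwaps_cons (c : B) {t t' : List B}
    (h : Relation.ReflTransGen (CommSwap M) t t') :
    Relation.ReflTransGen (CommSwap M) (c :: t) (c :: t') := by
  induction h with
  | refl => exact Relation.ReflTransGen.refl
  | tail _ hstep ih =>
      refine ih.tail ?_
      obtain ⟨a, b, p, q, hab, rfl, rfl⟩ := hstep
      exact ⟨a, b, c :: p, q, hab, rfl, rfl⟩

/-- Bubbling: if every letter before `a` commutes with `a`, then `l` is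
comm-swap equivalent to `a :: l.erase a`. -/
lemma bubble : ∀ (l : List B), l.Nodup → ∀ {a : B}, a ∈ l →
    (∀ b ∈ l, l.idxOf b < l.idxOf a → M b a = 2) →
    Relation.ReflTransGen (CommSwap M) l (a :: l.erase a)
  | [], _, a, ha, _ => absurd ha (List.not_mem_nil)
  | c :: r, hnd, a, ha, hcomm => by
    have hcr : c ∉ r := (List.nodup_cons.mp hnd).1
    have hndr : r.Nodup := (List.nodup_cons.mp hnd).2
    by_cases hca : c = a
    · subst hca
      rw [List.erase_cons_head]
    · have har : a ∈ r := by
        rcases List.mem_cons.mp ha with h0 | h0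
        · exact absurd h0.symm hca
        · exact h0
      have hcomm' : ∀ b ∈ r, r.idxOf b < r.idxOf a → M b a = 2 := by
        intro b hb hord
        have hbc : b ≠ c := fun h => hcr (h ▸ hb)
        have hac : a ≠ c := fun h => hcr (h ▸ har)
        refine hcomm b (List.mem_cons.mpr (Or.inr hb)) ?_
        rw [idxOf_cons_shift hbc, idxOf_cons_shift hac]
        omega
      have hMca : M c a = 2 := by
        have hac : a ≠ c := fun h => hcr (h ▸ har)
        refine hcomm c (List.mem_cons_self) ?_
        rw [idxOf_cons_self, idxOf_cons_shift hac]
        omega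
      have step1 : Relation.ReflTransGen (CommSwap M) (c :: r) (c :: a :: r.erase a) :=
        commSwaps_cons c (bubble r hndr har hcomm')
      have step2 : CommSwap M (c :: a :: r.erase a) (a :: c :: r.erase a) :=
        ⟨c, a, [], r.erase a, hMca, rfl, rfl⟩
      rw [List.erase_cons_tail (by simp [hca])]
      exact step1.tail step2

lemma commSwaps_rotEquiv {l l' : List B}
    (h : Relation.ReflTransGen (CommSwap M) l l') : RotEquiv M l l' := by
  induction h with
  | refl => exact Relation.EqvGen.refl _
  | tail _ hstep ih =>
      exact Relation.EqvGen.trans _ _ _ ih (Relation.EqvGen.rel _ _ (Or.inl hstep))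

/-- Two nodup lists with the same elements inducing the same order on all edges
are connected by commutation swaps. -/
lemma same_order_commSwaps : ∀ (l' l : List B), l.Nodup → l'.Nodup →
    (∀ x : B, x ∈ l ↔ x ∈ l') →
    (∀ u v : B, u ∈ l → v ∈ l → M.graph.Adj u v →
      (l.idxOf u < l.idxOf v ↔ l'.idxOf u < l'.idxOf v)) →
    Relation.ReflTransGen (CommSwap M) l l'
  | [], l, hnd, hnd', hmem, hord => by
    cases l with
    | nil => exact Relation.ReflTransGen.refl
    | cons c r => exact absurd ((hmem c).mp (List.mem_cons_self)) (List.not_mem_nil)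
  | a :: t', l, hnd, hnd', hmem, hord => by
    have hndt' : t'.Nodup := (List.nodup_cons.mp hnd').2
    have hat' : a ∉ t' := (List.nodup_cons.mp hnd').1
    have hal : a ∈ l := (hmem a).mpr (List.mem_cons_self)
    have hcomm : ∀ b ∈ l, l.idxOf b < l.idxOf a → M b a = 2 := by
      intro b hb hlt
      have hba : b ≠ a := by
        intro h; subst h; omega
      by_contra hM
      have hadj : M.graph.Adj b a := ⟨hba, hM⟩
      have := (hord b a hb hal hadj).mp hlt
      rw [idxOf_cons_self] at this
      omega
    have hbub := bubble (M := M) l hnd hal hcomm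
    have hnde : (l.erase a).Nodup := hnd.erase a
    have hmem' : ∀ x : B, x ∈ l.erase a ↔ x ∈ t' := by
      intro x
      by_cases hxa : x = a
      · subst hxa
        simp only [List.Nodup.not_mem_erase hnd, false_iff]
        exact hat'
      · rw [List.mem_erase_of_ne hxa, hmem]
        exact ⟨fun h => (List.mem_cons.mp h).resolve_left hxa, fun h => List.mem_cons.mpr (Or.inr h)⟩
    have hord' : ∀ u v : B, u ∈ l.erase a → v ∈ l.erase a → M.graph.Adj u v →
        ((l.erase a).idxOf u < (l.erase a).idxOf v ↔ t'.idxOf u < t'.idxOf v) := by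
      intro u v hu hv hadj
      have hua : u ≠ a := fun h => (List.Nodup.not_mem_erase hnd) (h ▸ hu)
      have hva : v ≠ a := fun h => (List.Nodup.not_mem_erase hnd) (h ▸ hv)
      have hul : u ∈ l := (List.mem_erase_of_ne hua).mp hu
      have hvl : v ∈ l := (List.mem_erase_of_ne hva).mp hv
      rw [erase_lt_iff l hnd hul hvl hua hva, hord u v hul hvl hadj,
        idxOf_cons_shift hua, idxOf_cons_shift hva]
      omega
    have hrec := same_order_commSwaps t' (l.erase a) hnde hndt' hmem' hord'
    exact hbub.trans (commSwaps_cons a hrec)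

end AuxComm

section AuxFinal
set_option linter.unusedSectionVars false

open EdgeOrientation List

variable {B : Type*} [DecidableEq B] {M : CoxeterMatrix B}

lemma rot_append (u : List B) : ∀ v : List B,
    Relation.ReflTransGen RotMove (u ++ v) (v ++ u) := by
  induction u with
  | nil => intro v; rw [List.nil_append, List.append_nil]
  | cons x u' ih =>
      intro v
      refine Relation.ReflTransGen.head (⟨x, u' ++ v, rfl, rfl⟩ : RotMove _ _) ?_
      have h2 := ih (v ++ [x])
      have e1 : u' ++ (v ++ [x]) = (u' ++ v) ++ [x] := (List.append_assoc _ _ _).symm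
      have e2 : (v ++ [x]) ++ u' = v ++ (x :: u') := by simp
      rwa [e1, e2] at h2

lemma R_rev (l l' : List B) (h : CommSwap M l l' ∨ RotMove l l') :
    Relation.ReflTransGen (fun x y => CommSwap M x y ∨ RotMove x y) l' l := by
  rcases h with h | h
  · exact Relation.ReflTransGen.single (Or.inl (commSwap_symm h))
  · obtain ⟨a, t, rfl, rfl⟩ := h
    exact Relation.ReflTransGen.mono (fun x y h => Or.inr h) _ _ (rot_append t [a])

lemma rtg_symm {α : Type*} {r : α → α → Prop}
    (hrev : ∀ a b, r a b → Relation.ReflTransGen r b a) {a b : α}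
    (h : Relation.ReflTransGen r a b) : Relation.ReflTransGen r b a := by
  induction h with
  | refl => exact Relation.ReflTransGen.refl
  | tail _ hstep ih => exact (hrev _ _ hstep).trans ih

lemma eqvGen_rtg {α : Type*} {r : α → α → Prop}
    (hrev : ∀ a b, r a b → Relation.ReflTransGen r b a) {a b : α}
    (h : Relation.EqvGen r a b) : Relation.ReflTransGen r a b := by
  induction h with
  | rel a b h => exact Relation.ReflTransGen.single h
  | refl a => exact Relation.ReflTransGen.refl
  | symm a b _ ih => exact rtg_symm hrev ih
  | trans a b c _ _ ih1 ih2 => exact ih1.trans ih2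

lemma R_step_word {l l' : List B} (hc : IsCoxeterWord l)
    (h : CommSwap M l l' ∨ RotMove l l') :
    IsCoxeterWord l' ∧ ∀ (h1 : ∀ i : B, i ∈ l) (h2 : ∀ i : B, i ∈ l'),
      SourceReach (wordOrient M l h1) (wordOrient M l' h2) := by
  have hperm : l.Perm l' := by
    rcases h with h | h
    · exact commSwap_perm h
    · obtain ⟨a, t, rfl, rfl⟩ := h
      exact (List.perm_append_singleton a t).symm
  have hc' : IsCoxeterWord l' := ⟨hperm.nodup_iff.mp hc.1, fun i => hperm.mem_iff.mp (hc.2 i)⟩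
  refine ⟨hc', fun h1 h2 => ?_⟩
  rcases h with h | h
  · rw [commSwap_wordOrient h hc.1 h1 h2]
    exact Relation.ReflTransGen.refl
  · obtain ⟨a, t, rfl, rfl⟩ := h
    exact Relation.ReflTransGen.single (rot_fire a t hc.1 h1 h2)

lemma forward_rtg {l l' : List B}
    (h : Relation.ReflTransGen (fun x y => CommSwap M x y ∨ RotMove x y) l l')
    (hc : IsCoxeterWord l) :
    IsCoxeterWord l' ∧ ∀ (h1 : ∀ i : B, i ∈ l) (h2 : ∀ i : B, i ∈ l'),
      SourceReach (wordOrient M l h1) (wordOrient M l' h2) := by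
  induction h with
  | refl => exact ⟨hc, fun h1 h2 => Relation.ReflTransGen.refl⟩
  | tail hprev hstep ih =>
      obtain ⟨hcm, hreach⟩ := ih
      obtain ⟨hcl', hstep'⟩ := R_step_word hcm hstep
      exact ⟨hcl', fun h1 h2 => (hreach h1 hcm.2).trans (hstep' hcm.2 h2)⟩

lemma commSwaps_wordOrient {l l' : List B}
    (h : Relation.ReflTransGen (CommSwap M) l l') (hc : IsCoxeterWord l) :
    ∃ hc' : IsCoxeterWord l', wordOrient M l hc.2 = wordOrient M l' hc'.2 := by
  induction h with
  | refl => exact ⟨hc, rfl⟩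
  | tail _ hstep ih =>
      obtain ⟨hcm, heq⟩ := ih
      have hperm := commSwap_perm hstep
      have hc' : IsCoxeterWord _ :=
        ⟨hperm.nodup_iff.mp hcm.1, fun i => hperm.mem_iff.mp (hcm.2 i)⟩
      exact ⟨hc', heq.trans (commSwap_wordOrient hstep hcm.1 hcm.2 hc'.2)⟩

lemma fire_step_word {l : List B} (hc : IsCoxeterWord l) {o' : EdgeOrientation M.graph}
    (hs : SourceFireStep (wordOrient M l hc.2) o') :
    ∃ l₁, ∃ hc₁ : IsCoxeterWord l₁, RotEquiv M l l₁ ∧ o' = wordOrient M l₁ hc₁.2 := by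
  obtain ⟨-, s, hsrc, hdir⟩ := hs
  have hsl : s ∈ l := hc.2 s
  have hcomm : ∀ b ∈ l, l.idxOf b < l.idxOf s → M b s = 2 := by
    intro b hb hlt
    by_contra hM
    have hbs : b ≠ s := by intro h; subst h; omega
    exact hsrc b ⟨⟨hbs, hM⟩, hlt⟩
  have hbub := bubble (M := M) l hc.1 hsl hcomm
  obtain ⟨hc1, heq⟩ := commSwaps_wordOrient hbub hc
  have hp : (s :: l.erase s).Perm (l.erase s ++ [s]) :=
    (List.perm_append_singleton s (l.erase s)).symm
  have hc2 : IsCoxeterWord (l.erase s ++ [s]) :=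
    ⟨hp.nodup_iff.mp hc1.1, fun i => hp.mem_iff.mp (hc1.2 i)⟩
  refine ⟨l.erase s ++ [s], hc2, ?_, ?_⟩
  · exact Relation.EqvGen.trans _ _ _ (commSwaps_rotEquiv hbub)
      (Relation.EqvGen.rel _ _ (Or.inr ⟨s, l.erase s, rfl, rfl⟩))
  · apply EdgeOrientation.ext'_s15
    rw [hdir, heq]
    exact (rot_dir s (l.erase s) hc1.1 hc1.2 hc2.2).symm

lemma backward_rtg {l : List B} (hc : IsCoxeterWord l) {o' : EdgeOrientation M.graph}
    (h : SourceReach (wordOrient M l hc.2) o') :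
    ∃ l₁, ∃ hc₁ : IsCoxeterWord l₁, RotEquiv M l l₁ ∧ o' = wordOrient M l₁ hc₁.2 := by
  induction h with
  | refl => exact ⟨l, hc, Relation.EqvGen.refl _, rfl⟩
  | tail hprev hstep ih =>
      obtain ⟨l₁, hc₁, hre, rfl⟩ := ih
      obtain ⟨l₂, hc₂, hre₂, heq₂⟩ := fire_step_word hc₁ hstep
      exact ⟨l₂, hc₂, Relation.EqvGen.trans _ _ _ hre hre₂, heq₂⟩

lemma wordOrient_eq_rotEquiv {l₁ l' : List B} (hc₁ : IsCoxeterWord l₁)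
    (hc' : IsCoxeterWord l') (heq : wordOrient M l₁ hc₁.2 = wordOrient M l' hc'.2) :
    RotEquiv M l₁ l' := by
  apply commSwaps_rotEquiv
  refine same_order_commSwaps l' l₁ hc₁.1 hc'.1
    (fun x => iff_of_true (hc₁.2 x) (hc'.2 x)) ?_
  intro u v hu hv hadj
  have h1 : (wordOrient M l₁ hc₁.2).dir u v ↔ (wordOrient M l' hc'.2).dir u v := by
    rw [heq]
  constructor
  · intro h
    exact (h1.mp ⟨hadj, h⟩).2
  · intro h
    exact (h1.mpr ⟨hadj, h⟩).2

end AuxFinal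

open EdgeOrientation in
/-- Rotation of a Coxeter word corresponds exactly to firing the corresponding
source vertex (the first letter), and two Coxeter words are rotation equivalent if and
only if their induced acyclic orientations lie in the same reachability class under
firing. -/
theorem rotEquiv_iff_reach {B : Type*} [Finite B] [DecidableEq B] (M : CoxeterMatrix B) :
    (∀ (i : B) (t : List B) (h : IsCoxeterWord (i :: t)) (h' : IsCoxeterWord (t ++ [i])),
      SourceFireStep (wordOrient M (i :: t) h.2) (wordOrient M (t ++ [i]) h'.2)) ∧
    (∀ (l l' : List B) (hl : IsCoxeterWord l) (hl' : IsCoxeterWord l'),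
      RotEquiv M l l' ↔ SourceReach (wordOrient M l hl.2) (wordOrient M l' hl'.2)) := by
  constructor
  · intro i t h h'
    exact rot_fire i t h.1 h.2 h'.2
  · intro l l' hl hl'
    constructor
    · intro hre
      have hr := eqvGen_rtg (R_rev (M := M)) hre
      exact (forward_rtg hr hl).2 hl.2 hl'.2
    · intro hsr
      obtain ⟨l₁, hc₁, hre, heq⟩ := backward_rtg hl hsr
      exact Relation.EqvGen.trans _ _ _ hre (wordOrient_eq_rotEquiv hc₁ hl' heq.symm)
end
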